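/- arXiv:0803.4392 — 4 statements merged into one kernel-verified Lean document; each statement's English description precedes it below -/
import Mathlib

section
/- Let l ≥ 1 and let n, m be divisors of l with n dividing m. If I = I_l(n,t) and J = I_l(m,s) are Riemann sets with I ∩ J ≠ ∅, then I ⊆ J. -/
open MeasureTheory Filter Set

/-- The circle `𝕋 = ℝ/ℤ` with its Lebesgue (Haar) probability measure. -/
abbrev Circle1 := AddCircle (1 : ℝ)

/-- The Riemann set `I_l(n,t) = ⋃_{i=0}^{n-1} [t/l + i/n, (t+1)/l + i/n) ⊆ 𝕋`. -/
def RiemannSet (l n t : ℕ) : Set Circle1 :=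
  ⋃ i ∈ Finset.range n,
    (fun r : ℝ => (r : Circle1)) ''
      Set.Ico ((t : ℝ) / l + (i : ℝ) / n) (((t : ℝ) + 1) / l + (i : ℝ) / n)

lemma riemann_endpoint (l n u c i : ℕ) (hn : 0 < n) (hu0 : 0 < u) (hu : l = n * u) :
    (c : ℝ) / l + (i : ℝ) / n = ((c : ℝ) + i * u) / l := by
  subst hu
  have hn' : (n : ℝ) ≠ 0 := by positivity
  have hu' : (u : ℝ) ≠ 0 := by positivity
  push_cast
  field_simp

/-- If `n ∣ m`, both dividing `l`, and the Riemann sets `I_l(n,t)`, `I_l(m,s)` intersect,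
then `I_l(n,t) ⊆ I_l(m,s)`. -/
theorem riemannSet_subset_of_inter_nonempty
    (l n m t s : ℕ) (hl : 1 ≤ l) (hn : n ∣ l) (hm : m ∣ l) (hnm : n ∣ m)
    (ht : t < l / n) (hs : s < l / m)
    (hne : (RiemannSet l n t ∩ RiemannSet l m s).Nonempty) :
    RiemannSet l n t ⊆ RiemannSet l m s := by
  obtain ⟨u, hu⟩ := hn
  obtain ⟨v, hv⟩ := hm
  obtain ⟨w, hw⟩ := hnm
  have hn0 : 0 < n := by
    rcases Nat.eq_zero_or_pos n with h | h
    · subst h; simp at hu; omega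
    · exact h
  have hm0 : 0 < m := by
    rcases Nat.eq_zero_or_pos m with h | h
    · subst h; simp at hv; omega
    · exact h
  have hu0 : 0 < u := by nlinarith
  have hv0 : 0 < v := by nlinarith
  have hw0 : 0 < w := by nlinarith
  have ht' : t < u := by rw [hu, Nat.mul_div_cancel_left _ hn0] at ht; exact ht
  have hs' : s < v := by rw [hv, Nat.mul_div_cancel_left _ hm0] at hs; exact hs
  have huwv : u = w * v := by
    have : n * u = n * (w * v) := by rw [← hu, hv, hw]; ring
    exact Nat.eq_of_mul_eq_mul_left hn0 this
  have hl0 : (0:ℝ) < l := by exact_mod_cast hl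
  -- unfold the nonempty intersection
  obtain ⟨x, hx1, hx2⟩ := hne
  simp only [RiemannSet, Set.mem_iUnion, Finset.mem_range, Set.mem_image, Set.mem_Ico] at hx1 hx2
  obtain ⟨i, hi, r, ⟨hr1, hr2⟩, hrx⟩ := hx1
  obtain ⟨j, hj, r', ⟨hr1', hr2'⟩, hrx'⟩ := hx2
  -- the two representatives differ by an integer
  have hcoe : (r : Circle1) = (r' : Circle1) := hrx.trans hrx'.symm
  have hmem : r - r' ∈ AddSubgroup.zmultiples (1:ℝ) :=
    QuotientAddGroup.eq_iff_sub_mem.mp hcoe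
  obtain ⟨z, hz⟩ := AddSubgroup.mem_zmultiples_iff.mp hmem
  have hz' : (z : ℝ) = r - r' := by simpa using hz
  -- rewrite endpoints over the common denominator l
  rw [riemann_endpoint l n u t i hn0 hu0 hu] at hr1
  rw [show ((t:ℝ)+1) = (((t+1:ℕ)):ℝ) by push_cast; ring,
    riemann_endpoint l n u (t+1) i hn0 hu0 hu] at hr2
  rw [riemann_endpoint l m v s j hm0 hv0 hv] at hr1'
  rw [show ((s:ℝ)+1) = (((s+1:ℕ)):ℝ) by push_cast; ring,
    riemann_endpoint l m v (s+1) j hm0 hv0 hv] at hr2'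
  push_cast at hr2 hr2'
  rw [div_le_iff₀ hl0] at hr1 hr1'
  rw [lt_div_iff₀ hl0] at hr2 hr2'
  -- derive the integer equation t + i*u = s + j*v
  have key : (t : ℤ) + i * u = s + j * v := by
    have hzl : (z : ℝ) * l = r * l - r' * l := by rw [hz']; ring
    have h1 : ((t : ℝ) + i * u) - ((s : ℝ) + j * v) - 1 < z * l := by
      rw [hzl]; linarith
    have h2 : (z : ℝ) * l < ((t : ℝ) + i * u) - ((s : ℝ) + j * v) + 1 := by
      rw [hzl]; linarith
    have h1' : ((t : ℤ) + i * u) - ((s : ℤ) + j * v) - 1 < z * l := by exact_mod_cast h1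
    have h2' : (z : ℤ) * l < ((t : ℤ) + i * u) - ((s : ℤ) + j * v) + 1 := by exact_mod_cast h2
    have hzeq : (z : ℤ) * l = ((t : ℤ) + i * u) - ((s : ℤ) + j * v) := by omega
    -- bounds: both sides lie in [0, l)
    have hb1 : (t : ℤ) + i * u ≤ l - 1 := by
      have h : t + i * u < l := by
        calc t + i * u < u + i * u := by omega
        _ = (i + 1) * u := by ring
        _ ≤ n * u := Nat.mul_le_mul_right u (by omega)
        _ = l := hu.symm
      have h' : ((t + i * u : ℕ) : ℤ) < (l : ℤ) := by exact_mod_cast h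
      push_cast at h'
      linarith
    have hb2 : (s : ℤ) + j * v ≤ l - 1 := by
      have h : s + j * v < l := by
        calc s + j * v < v + j * v := by omega
        _ = (j + 1) * v := by ring
        _ ≤ m * v := Nat.mul_le_mul_right v (by omega)
        _ = l := hv.symm
      have h' : ((s + j * v : ℕ) : ℤ) < (l : ℤ) := by exact_mod_cast h
      push_cast at h'
      linarith
    have hpos1 : (0:ℤ) ≤ (t : ℤ) + i * u := by positivity
    have hpos2 : (0:ℤ) ≤ (s : ℤ) + j * v := by positivity
    have hl' : (1:ℤ) ≤ l := by exact_mod_cast hl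
    -- |z*l| < l forces z = 0
    have hz0 : z = 0 := by
      rcases lt_trichotomy z 0 with h | h | h
      · exfalso
        have h2 : z * l ≤ -1 * l :=
          mul_le_mul_of_nonneg_right (show z ≤ -1 by omega) (show (0:ℤ) ≤ l by omega)
        omega
      · exact h
      · exfalso
        have h2 : 1 * l ≤ z * l :=
          mul_le_mul_of_nonneg_right (show (1:ℤ) ≤ z by omega) (show (0:ℤ) ≤ l by omega)
        omega
    rw [hz0] at hzeq; omega
  -- now prove the inclusion
  intro x hx
  simp only [RiemannSet, Set.mem_iUnion, Finset.mem_range, Set.mem_image, Set.mem_Ico] at hx ⊢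
  obtain ⟨i', hi', r'', ⟨hra, hrb⟩, hrr⟩ := hx
  -- the target index
  set J : ℤ := (j : ℤ) + ((i' : ℤ) - i) * w with hJ
  have hJeq : (s : ℤ) + J * v = (t : ℤ) + i' * u := by
    have huZ : (u : ℤ) = w * v := by exact_mod_cast huwv
    rw [hJ, huZ]; rw [huZ] at key; linear_combination -key
  have hJ0 : 0 ≤ J := by
    by_contra h
    push_neg at h
    have h1 : J ≤ -1 := by omega
    have h2 : J * v ≤ -1 * v :=
      mul_le_mul_of_nonneg_right h1 (show (0:ℤ) ≤ v by omega)
    have hb : (t : ℤ) + i' * u ≥ 0 := by positivity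
    omega
  have hJm : J < m := by
    by_contra h
    push_neg at h
    have hmul : (m:ℤ) * v ≤ J * v :=
      mul_le_mul_of_nonneg_right h (show (0:ℤ) ≤ v by omega)
    have hb1 : (t : ℤ) + i' * u ≤ l - 1 := by
      have h : t + i' * u < l := by
        calc t + i' * u < u + i' * u := by omega
        _ = (i' + 1) * u := by ring
        _ ≤ n * u := Nat.mul_le_mul_right u (by omega)
        _ = l := hu.symm
      have h' : ((t + i' * u : ℕ) : ℤ) < (l : ℤ) := by exact_mod_cast h
      push_cast at h'
      linarith
    have hlmv : (l:ℤ) = m * v := by exact_mod_cast hv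
    omega
  have hJnat : s + J.toNat * v = t + i' * u := by
    have h : (s:ℤ) + (J.toNat:ℤ) * v = (t:ℤ) + i' * u := by
      rw [Int.toNat_of_nonneg hJ0]; exact hJeq
    exact_mod_cast h
  refine ⟨J.toNat, by omega, r'', ⟨?_, ?_⟩, hrr⟩
  · rw [riemann_endpoint l m v s J.toNat hm0 hv0 hv]
    rw [riemann_endpoint l n u t i' hn0 hu0 hu] at hra
    have heq : ((s:ℝ) + J.toNat * v) = ((t:ℝ) + i' * u) := by exact_mod_cast hJnat
    rw [heq]; exact hra
  · rw [show ((s:ℝ)+1) = (((s+1:ℕ)):ℝ) by push_cast; ring,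
      riemann_endpoint l m v (s+1) J.toNat hm0 hv0 hv]
    rw [show ((t:ℝ)+1) = (((t+1:ℕ)):ℝ) by push_cast; ring,
      riemann_endpoint l n u (t+1) i' hn0 hu0 hu] at hrb
    have heq : (((s+1:ℕ):ℝ) + J.toNat * v) = (((t+1:ℕ):ℝ) + i' * u) := by
      have h : ((s:ℝ) + J.toNat * v) = ((t:ℝ) + i' * u) := by exact_mod_cast hJnat
      push_cast
      linarith
    rw [heq]; exact hrb
end

section
/- Let p_1 < p_2 < ⋯ < p_d be the first d primes, l = p_1^{l_1}⋯p_d^{l_d}, and m = p_1^{m_1}⋯p_d^{m_d} with 0 ≤ m_k ≤ l_k. Fix an integer t ≥ 0, let t_k = t mod p_k^{m_k}, and let t̄_k denote the p_k-reverse of t_k computed with m_k base-p_k digits. For u = 0,1,…,l/m − 1 set s_k(u) = (mu + t) mod p_k^{l_k} and let s̄_k(u) be the p_k-reverse of s_k(u) computed with l_k base-p_k digits. Then B_m(t̄_1,…,t̄_d) = ⋃_{u=0}^{l/m − 1} B_l(s̄_1(u),…,s̄_d(u)), and the rectangles in this union are pairwise disjoint. -/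
open MeasureTheory Set

/-- The infinite torus `𝕋^∞ = ∏_{k=1}^∞ 𝕋`. -/
abbrev Tinf := ℕ → Circle1

/-- `nthPrime k` is the `(k+1)`-st prime: `nthPrime 0 = 2 = p_1`, `nthPrime 1 = 3 = p_2`, … -/
noncomputable def nthPrime (k : ℕ) : ℕ := Nat.nth Nat.Prime k

/-- The arc `[a, b) ⊆ 𝕋`, image of the real interval `[a,b)` on the circle. -/
def circleIco (a b : ℝ) : Set Circle1 := (fun r : ℝ => (r : Circle1)) '' Set.Ico a b

/-- The rectangle `B_l(j_1,…,j_d) = {x ∈ 𝕋^∞ : j_k/p_k^{L_k} ≤ x_k < (j_k+1)/p_k^{L_k}}`,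
where `l = p_1^{L_1} ⋯ p_d^{L_d}`. -/
def Rect (d : ℕ) (L j : Fin d → ℕ) : Set Tinf :=
  {x | ∀ k : Fin d,
    x k.val ∈ circleIco ((j k : ℝ) / ((nthPrime k.val ^ L k : ℕ) : ℝ))
      (((j k : ℝ) + 1) / ((nthPrime k.val ^ L k : ℕ) : ℝ))}

/-- The `p`-reverse of `a` computed with `j` base-`p` digits: the digit of `a` at `p^i`
becomes the digit at `p^(j-1-i)`. -/
def pReverse (p j a : ℕ) : ℕ :=
  ∑ i ∈ Finset.range j, (a / p ^ i % p) * p ^ (j - 1 - i)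

-- pReverse lemmas
lemma pReverse_succ (p j a : ℕ) :
    pReverse p (j+1) a = p * pReverse p j a + a / p ^ j % p := by
  unfold pReverse
  rw [Finset.sum_range_succ, Finset.mul_sum]
  congr 1
  · refine Finset.sum_congr rfl fun i hi => ?_
    rw [Finset.mem_range] at hi
    have h : j + 1 - 1 - i = (j - 1 - i) + 1 := by omega
    rw [h, pow_succ]
    ring
  · simp

lemma pReverse_lt {p : ℕ} (hp : 0 < p) (j a : ℕ) : pReverse p j a < p ^ j := by
  induction j with
  | zero => simp [pReverse]
  | succ j ih =>
    rw [pReverse_succ, pow_succ]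
    have h1 : a / p ^ j % p < p := Nat.mod_lt _ hp
    have h2 : p * (pReverse p j a + 1) = p * pReverse p j a + p := Nat.mul_succ p _
    calc p * pReverse p j a + a / p ^ j % p < p * (pReverse p j a + 1) := by omega
    _ ≤ p * p ^ j := Nat.mul_le_mul_left _ (by omega)
    _ = p ^ j * p := Nat.mul_comm _ _

lemma pReverse_div {p : ℕ} (hp : 0 < p) {M L : ℕ} (h : M ≤ L) (a : ℕ) :
    pReverse p L a / p ^ (L - M) = pReverse p M a := by
  induction L, h using Nat.le_induction with
  | base => simp
  | succ L hML ih =>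
    rw [pReverse_succ]
    have he : L + 1 - M = (L - M) + 1 := by omega
    rw [he, pow_succ', ← Nat.div_div_eq_div_mul, Nat.mul_add_div hp,
      Nat.div_eq_of_lt (Nat.mod_lt _ hp), Nat.add_zero, ih]

lemma pReverse_mul_add {p : ℕ} (hp : 0 < p) (j q r : ℕ) :
    pReverse p j (p ^ j * q + r) = pReverse p j r := by
  unfold pReverse
  refine Finset.sum_congr rfl fun i hi => ?_
  rw [Finset.mem_range] at hi
  congr 1
  have h1 : p ^ j = p ^ i * p ^ (j - i) := by rw [← pow_add]; congr 1; omega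
  have h2 : p ^ (j - i) * q = p * (p ^ (j - i - 1) * q) := by
    rw [← mul_assoc, ← pow_succ']; congr 2; omega
  calc (p ^ j * q + r) / p ^ i % p
      = (p ^ (j - i) * q + r / p ^ i) % p := by
        rw [h1, mul_assoc, Nat.mul_add_div (pow_pos hp i)]
    _ = (r / p ^ i + p * (p ^ (j - i - 1) * q)) % p := by rw [h2, Nat.add_comm]
    _ = r / p ^ i % p := Nat.add_mul_mod_self_left _ _ _

lemma pReverse_mod {p : ℕ} (hp : 0 < p) (j a : ℕ) :
    pReverse p j (a % p ^ j) = pReverse p j a := by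
  conv_rhs => rw [← Nat.div_add_mod a (p ^ j)]
  rw [pReverse_mul_add hp]

lemma pReverse_succ' (p j a : ℕ) :
    pReverse p (j+1) a = (a % p) * p ^ j + pReverse p j (a / p) := by
  unfold pReverse
  rw [Finset.sum_range_succ', Nat.add_comm]
  congr 1
  · simp
  · refine Finset.sum_congr rfl fun i hi => ?_
    rw [Finset.mem_range] at hi
    have h1 : a / p ^ (i + 1) = a / p / p ^ i := by
      rw [Nat.div_div_eq_div_mul, ← pow_succ']
    have h2 : j + 1 - 1 - (i + 1) = j - 1 - i := by omega
    rw [h1, h2]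

lemma pReverse_pReverse {p : ℕ} (hp : 0 < p) (j : ℕ) :
    ∀ a, a < p ^ j → pReverse p j (pReverse p j a) = a := by
  induction j with
  | zero =>
    intro a ha
    rw [pow_zero] at ha
    obtain rfl : a = 0 := Nat.lt_one_iff.mp ha
    simp [pReverse]
  | succ j ih =>
    intro a ha
    have hd : a / p ^ j < p := by
      rw [Nat.div_lt_iff_lt_mul (pow_pos hp j)]
      calc a < p ^ (j + 1) := ha
      _ = p * p ^ j := pow_succ' p j
    have h1 : pReverse p (j+1) a = p * pReverse p j a + a / p ^ j := by
      rw [pReverse_succ, Nat.mod_eq_of_lt hd]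
    rw [h1, pReverse_succ']
    have h2 : (p * pReverse p j a + a / p ^ j) % p = a / p ^ j := by
      rw [Nat.mul_add_mod, Nat.mod_eq_of_lt hd]
    have h3 : (p * pReverse p j a + a / p ^ j) / p = pReverse p j a := by
      rw [Nat.mul_add_div hp, Nat.div_eq_of_lt hd, Nat.add_zero]
    rw [h2, h3, ← pReverse_mod hp j a, ih _ (Nat.mod_lt _ (pow_pos hp j))]
    exact Nat.div_add_mod' a (p ^ j)

lemma pReverse_inj {p : ℕ} (hp : 0 < p) {j a b : ℕ} (ha : a < p ^ j) (hb : b < p ^ j)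
    (h : pReverse p j a = pReverse p j b) : a = b := by
  rw [← pReverse_pReverse hp j a ha, ← pReverse_pReverse hp j b hb, h]

lemma coprime_prod_dvd {ι : Type*} {f : ι → ℕ} {n : ℕ} (s : Finset ι)
    (hcop : ∀ i ∈ s, ∀ j ∈ s, i ≠ j → Nat.Coprime (f i) (f j))
    (hdvd : ∀ i ∈ s, f i ∣ n) : (∏ i ∈ s, f i) ∣ n := by
  induction s using Finset.cons_induction with
  | empty => simp
  | cons a s ha ih =>
    rw [Finset.prod_cons]
    refine Nat.Coprime.mul_dvd_of_dvd_of_dvd ?_ (hdvd a (Finset.mem_cons_self a s)) ?_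
    · exact Nat.Coprime.prod_right fun i hi =>
        hcop a (Finset.mem_cons_self a s) i (Finset.mem_cons_of_mem hi)
          (fun he => ha (he ▸ hi))
    · exact ih (fun i hi j hj hne => hcop i (Finset.mem_cons_of_mem hi) j
        (Finset.mem_cons_of_mem hj) hne) (fun i hi => hdvd i (Finset.mem_cons_of_mem hi))

noncomputable def crep (x : Circle1) : ℝ := ↑(AddCircle.equivIco 1 0 x)

lemma crep_mem (x : Circle1) : crep x ∈ Set.Ico (0:ℝ) (0 + 1) := (AddCircle.equivIco 1 0 x).2

lemma coe_crep (x : Circle1) : ((crep x : ℝ) : Circle1) = x := by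
  have h := (AddCircle.equivIco (1:ℝ) 0).symm_apply_apply x
  rwa [AddCircle.equivIco, QuotientAddGroup.equivIcoMod_symm_apply] at h

lemma mem_circleIco_iff {a b : ℝ} (ha : 0 ≤ a) (hb : b ≤ 1) {x : Circle1} :
    x ∈ circleIco a b ↔ a ≤ crep x ∧ crep x < b := by
  constructor
  · rintro ⟨r, hr, rfl⟩
    have hr01 : r ∈ Set.Ico (0:ℝ) (0 + 1) := ⟨by linarith [hr.1], by linarith [hr.2]⟩
    have hc : crep ((r : ℝ) : Circle1) = r :=
      (AddCircle.coe_eq_coe_iff_of_mem_Ico (crep_mem _) hr01).mp (coe_crep _)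
    rw [hc]; exact hr
  · rintro ⟨h1, h2⟩
    exact ⟨crep x, ⟨h1, h2⟩, coe_crep x⟩

lemma mem_rect_iff {d : ℕ} {e j : Fin d → ℕ} (hj : ∀ k, j k < nthPrime k.val ^ e k)
    (x : Tinf) :
    x ∈ Rect d e j ↔
      ∀ k : Fin d, ⌊crep (x k.val) * ((nthPrime k.val ^ e k : ℕ) : ℝ)⌋₊ = j k := by
  simp only [Rect, Set.mem_setOf_eq]
  refine forall_congr' fun k => ?_
  have hP0 : 0 < nthPrime k.val ^ e k := pow_pos (Nat.prime_nth_prime k.val).pos _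
  have hPr : (0:ℝ) < ((nthPrime k.val ^ e k : ℕ) : ℝ) := by exact_mod_cast hP0
  have hjP : ((j k : ℝ) + 1) ≤ ((nthPrime k.val ^ e k : ℕ) : ℝ) := by exact_mod_cast hj k
  have hcrep := crep_mem (x k.val)
  rw [mem_circleIco_iff (by positivity) (by rw [div_le_one hPr]; exact hjP)]
  rw [Nat.floor_eq_iff (by nlinarith [hcrep.1])]
  rw [div_le_iff₀ hPr, lt_div_iff₀ hPr]

lemma floor_pow_div {r : ℝ} (hr : 0 ≤ r) {p : ℕ} (hp : 0 < p) {Mk Lk : ℕ} (h : Mk ≤ Lk) :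
    ⌊r * ((p ^ Mk : ℕ) : ℝ)⌋₊ = ⌊r * ((p ^ Lk : ℕ) : ℝ)⌋₊ / p ^ (Lk - Mk) := by
  have hpos : (0:ℝ) < ((p ^ (Lk - Mk) : ℕ) : ℝ) := by exact_mod_cast pow_pos hp _
  have key : r * ((p ^ Mk : ℕ) : ℝ) = (r * ((p ^ Lk : ℕ) : ℝ)) / ((p ^ (Lk - Mk) : ℕ) : ℝ) := by
    rw [eq_div_iff (ne_of_gt hpos)]
    push_cast
    rw [mul_assoc, ← pow_add]
    congr 2
    omega
  rw [key, Nat.floor_div_natCast]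


/-- **Decomposition of a rectangle into smaller rectangles via digit reversal.**
With `l = ∏ p_k^{L_k}`, `m = ∏ p_k^{M_k}` (`M_k ≤ L_k`), `t̄_k` the `p_k`-reverse of
`t mod p_k^{M_k}` with `M_k` digits, and `s̄_k(u)` the `p_k`-reverse of
`(mu + t) mod p_k^{L_k}` with `L_k` digits, one has
`B_m(t̄_1,…,t̄_d) = ⋃_{u=0}^{l/m - 1} B_l(s̄_1(u),…,s̄_d(u))`, a pairwise disjoint union. -/
theorem rect_eq_disjiUnion_rects
    (d : ℕ) (hd : 1 ≤ d) (L M : Fin d → ℕ) (hML : ∀ k, M k ≤ L k) (t : ℕ)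
    (l m : ℕ) (hl : l = ∏ k, nthPrime k.val ^ L k) (hm : m = ∏ k, nthPrime k.val ^ M k)
    (tbar : Fin d → ℕ) (sbar : ℕ → Fin d → ℕ)
    (htbar : ∀ k, tbar k = pReverse (nthPrime k.val) (M k) (t % nthPrime k.val ^ M k))
    (hsbar : ∀ u k, sbar u k =
      pReverse (nthPrime k.val) (L k) ((m * u + t) % nthPrime k.val ^ L k)) :
    Rect d M tbar = (⋃ u ∈ Finset.range (l / m), Rect d L (sbar u)) ∧
      ∀ u ∈ Finset.range (l / m), ∀ v ∈ Finset.range (l / m), u ≠ v →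
        Disjoint (Rect d L (sbar u)) (Rect d L (sbar v)) := by
  have hppos : ∀ k : Fin d, 0 < nthPrime k.val := fun k => (Nat.prime_nth_prime k.val).pos
  set P : Fin d → ℕ := fun k => nthPrime k.val ^ L k with hPdef
  set Q : Fin d → ℕ := fun k => nthPrime k.val ^ M k with hQdef
  set Rr : Fin d → ℕ := fun k => nthPrime k.val ^ (L k - M k) with hRdef
  have hP0 : ∀ k, 0 < P k := fun k => pow_pos (hppos k) _
  have hR0 : ∀ k, 0 < Rr k := fun k => pow_pos (hppos k) _
  have hPQR : ∀ k, P k = Q k * Rr k := by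
    intro k; rw [hPdef, hQdef, hRdef]
    show nthPrime k.val ^ L k = _ * _
    rw [← pow_add]
    congr 1
    exact (Nat.add_sub_cancel' (hML k)).symm
  have hmpos : 0 < m := by
    rw [hm]; exact Finset.prod_pos fun k _ => pow_pos (hppos k) _
  have hlm : l = m * ∏ k, Rr k := by
    rw [hl, hm, ← Finset.prod_mul_distrib]
    exact Finset.prod_congr rfl fun k _ => hPQR k
  have hdivlm : l / m = ∏ k, Rr k := by rw [hlm, Nat.mul_div_cancel_left _ hmpos]
  have hQdvdm : ∀ k, Q k ∣ m := fun k => hm ▸ Finset.dvd_prod_of_mem _ (Finset.mem_univ k)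
  have hcop : ∀ k k' : Fin d, k ≠ k' → Nat.Coprime (P k) (P k') := by
    intro k k' hne
    apply Nat.Coprime.pow
    show Nat.Coprime (Nat.nth Nat.Prime k.val) (Nat.nth Nat.Prime k'.val)
    rw [Nat.coprime_primes (Nat.prime_nth_prime k.val) (Nat.prime_nth_prime k'.val)]
    exact fun h => hne (Fin.ext (Nat.nth_injective Nat.infinite_setOf_prime h))
  have htlt : ∀ k, tbar k < Q k := fun k => htbar k ▸ pReverse_lt (hppos k) _ _
  have hslt : ∀ u k, sbar u k < P k := fun u k => hsbar u k ▸ pReverse_lt (hppos k) _ _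
  -- key digit fact: high part of sbar is tbar
  have hsdiv : ∀ u k, sbar u k / Rr k = tbar k := by
    intro u k
    obtain ⟨c, hc⟩ := hQdvdm k
    have harg : ((m * u + t) % P k) % Q k = t % Q k := by
      rw [Nat.mod_mod_of_dvd _ ⟨Rr k, hPQR k⟩, hc, mul_assoc, Nat.mul_add_mod]
    rw [hsbar, htbar]
    calc pReverse (nthPrime k.val) (L k) ((m * u + t) % P k) / Rr k
        = pReverse (nthPrime k.val) (M k) ((m * u + t) % P k) :=
          pReverse_div (hppos k) (hML k) _
      _ = pReverse (nthPrime k.val) (M k) (((m * u + t) % P k) % Q k) :=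
          (pReverse_mod (hppos k) _ _).symm
      _ = pReverse (nthPrime k.val) (M k) (t % Q k) := by rw [harg]
  -- injectivity of u ↦ sbar u
  have hinj : ∀ u v, u < l / m → v < l / m → (∀ k, sbar u k = sbar v k) → u = v := by
    have aux : ∀ u v, u ≤ v → v < l / m → (∀ k, sbar u k = sbar v k) → u = v := by
      intro u v huv hv hsv
      obtain ⟨c, rfl⟩ := Nat.le.dest huv
      have hPdvd : ∀ k : Fin d, P k ∣ m * c := by
        intro k
        have h1 : (m * u + t) % P k = (m * (u + c) + t) % P k := by
          have hh := hsv k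
          rw [hsbar, hsbar] at hh
          exact pReverse_inj (hppos k) (Nat.mod_lt _ (hP0 k)) (Nat.mod_lt _ (hP0 k)) hh
        have h2 : m * (u + c) + t = (m * u + t) + m * c := by ring
        rw [h2] at h1
        have h3 : (m * u + t) ≡ (m * u + t) + m * c [MOD P k] := h1
        have h4 := (Nat.modEq_iff_dvd' (Nat.le_add_right _ _)).mp h3
        simpa using h4
      have hldvd : l ∣ m * c := by
        rw [hl]
        exact coprime_prod_dvd Finset.univ
          (fun k _ k' _ hne => hcop k k' hne) (fun k _ => hPdvd k)
      rw [hlm] at hldvd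
      have hdc : (∏ k, Rr k) ∣ c := (Nat.mul_dvd_mul_iff_left hmpos).mp hldvd
      have hclt : c < ∏ k, Rr k := by rw [← hdivlm]; omega
      have : c = 0 := Nat.eq_zero_of_dvd_of_lt hdc hclt
      omega
    intro u v hu hv hsv
    rcases le_total u v with h | h
    · exact aux u v h hv hsv
    · exact (aux v u h hu (fun k => (hsv k).symm)).symm
  -- membership characterizations
  have hmemM : ∀ x : Tinf, x ∈ Rect d M tbar ↔
      ∀ k, ⌊crep (x k.val) * ((Q k : ℕ) : ℝ)⌋₊ = tbar k := fun x => mem_rect_iff htlt x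
  have hmemL : ∀ u (x : Tinf), x ∈ Rect d L (sbar u) ↔
      ∀ k, ⌊crep (x k.val) * ((P k : ℕ) : ℝ)⌋₊ = sbar u k := fun u x => mem_rect_iff (hslt u) x
  have hfloor : ∀ (x : Tinf) (k : Fin d),
      ⌊crep (x k.val) * ((Q k : ℕ) : ℝ)⌋₊ = ⌊crep (x k.val) * ((P k : ℕ) : ℝ)⌋₊ / Rr k :=
    fun x k => floor_pow_div (crep_mem (x k.val)).1 (hppos k) (hML k)
  constructor
  · -- set equality
    ext x
    simp only [Set.mem_iUnion, Finset.mem_range, exists_prop]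
    constructor
    · intro hx
      set n : Fin d → ℕ := fun k => ⌊crep (x k.val) * ((P k : ℕ) : ℝ)⌋₊ with hn
      have hnP : ∀ k, n k < P k := by
        intro k
        have h1 : crep (x k.val) * ((P k : ℕ) : ℝ) < ((P k : ℕ) : ℝ) := by
          have := (crep_mem (x k.val)).2
          have hPr : (0:ℝ) < ((P k : ℕ) : ℝ) := by exact_mod_cast hP0 k
          nlinarith [(crep_mem (x k.val)).1]
        have h0 : (0:ℝ) ≤ crep (x k.val) * ((P k : ℕ) : ℝ) :=
          mul_nonneg (crep_mem (x k.val)).1 (by exact_mod_cast (hP0 k).le)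
        exact (Nat.floor_lt h0).mpr h1
      have hnt : ∀ k, n k / Rr k = tbar k := by
        intro k
        rw [hn, ← hfloor x k]
        exact (hmemM x).mp hx k
      -- surjectivity via cardinality
      have hcard : (Fintype.piFinset fun k => Finset.range (Rr k)).card ≤
          (Finset.range (l / m)).card := by
        rw [Fintype.card_piFinset, Finset.card_range, hdivlm]
        simp
      have hmaps : ∀ (u : ℕ) (_ : u ∈ Finset.range (l / m)),
          (fun k => sbar u k % Rr k) ∈ Fintype.piFinset fun k => Finset.range (Rr k) := by
        intro u _
        rw [Fintype.mem_piFinset]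
        exact fun k => Finset.mem_range.mpr (Nat.mod_lt _ (hR0 k))
      have hinj' : ∀ (a₁ a₂ : ℕ) (ha₁ : a₁ ∈ Finset.range (l / m))
          (ha₂ : a₂ ∈ Finset.range (l / m)),
          (fun k => sbar a₁ k % Rr k) = (fun k => sbar a₂ k % Rr k) → a₁ = a₂ := by
        intro a₁ a₂ h1 h2 heq
        refine hinj a₁ a₂ (Finset.mem_range.mp h1) (Finset.mem_range.mp h2) fun k => ?_
        have e1 : sbar a₁ k % Rr k = sbar a₂ k % Rr k := congrFun heq k
        have e2 : sbar a₁ k / Rr k = sbar a₂ k / Rr k := by rw [hsdiv, hsdiv]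
        calc sbar a₁ k = Rr k * (sbar a₁ k / Rr k) + sbar a₁ k % Rr k :=
              (Nat.div_add_mod _ _).symm
          _ = Rr k * (sbar a₂ k / Rr k) + sbar a₂ k % Rr k := by rw [e1, e2]
          _ = sbar a₂ k := Nat.div_add_mod _ _
      have hsurj := Finset.surj_on_of_inj_on_of_card_le
        (fun u _ => fun k => sbar u k % Rr k) hmaps hinj' hcard
      have hb : (fun k => n k % Rr k) ∈ Fintype.piFinset fun k => Finset.range (Rr k) := by
        rw [Fintype.mem_piFinset]
        exact fun k => Finset.mem_range.mpr (Nat.mod_lt _ (hR0 k))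
      obtain ⟨u, hu, hequ⟩ := hsurj _ hb
      refine ⟨u, Finset.mem_range.mp hu, ?_⟩
      rw [hmemL]
      intro k
      have e1 : n k % Rr k = sbar u k % Rr k := congrFun hequ k
      have e2 : n k / Rr k = sbar u k / Rr k := by rw [hnt, hsdiv]
      show n k = sbar u k
      calc n k = Rr k * (n k / Rr k) + n k % Rr k := (Nat.div_add_mod _ _).symm
        _ = Rr k * (sbar u k / Rr k) + sbar u k % Rr k := by rw [e1, e2]
        _ = sbar u k := Nat.div_add_mod _ _
    · rintro ⟨u, hu, hx⟩
      rw [hmemM]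
      intro k
      rw [hfloor x k, (hmemL u x).mp hx k, hsdiv u k]
  · -- disjointness
    intro u hu v hv hne
    rw [Set.disjoint_left]
    intro x hxu hxv
    exact hne (hinj u v (Finset.mem_range.mp hu) (Finset.mem_range.mp hv) fun k => by
      rw [← (hmemL u x).mp hxu k, (hmemL v x).mp hxv k])
end

section
/- Let (X, μ) be a probability space and let A, A_1, A_2, …, A_n be independent measurable sets with ∑_{k=1}^n μ(A_k) ≤ 1/2. Set E = A ∩ (⋃_{k=1}^n A_k). Then there is an absolute constant C > 0 such that ∫_E Ψ( (1/3)(1 + ∑_{k=1}^n 𝟙_{A_k}(x)) ) dμ(x) ≤ C·μ(E). -/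
open MeasureTheory ProbabilityTheory Set

/-- `α(x) = x^{x-1}` for `x > 1` and `α(x) = x` for `x ≤ 1`. -/
noncomputable def alphaFn (x : ℝ) : ℝ := if 1 < x then x ^ (x - 1) else x

/-- `Ψ(x) = ∫_0^{|x|} α(t) dt`. -/
noncomputable def PsiFn (x : ℝ) : ℝ := ∫ t in (0:ℝ)..|x|, alphaFn t

universe u





lemma alpha_nonneg {x : ℝ} (hx : 0 ≤ x) : 0 ≤ alphaFn x := by
  unfold alphaFn; split
  · positivity
  · exact hx

lemma alpha_mono : MonotoneOn alphaFn (Set.Ici 0) := by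
  intro a ha b hb hab
  simp only [Set.mem_Ici] at ha hb
  unfold alphaFn
  rcases lt_or_ge 1 a with h1a | h1a
  · rw [if_pos h1a, if_pos (lt_of_lt_of_le h1a hab)]
    calc a ^ (a-1) ≤ b ^ (a-1) := by
          apply Real.rpow_le_rpow (le_of_lt (lt_trans zero_lt_one h1a)) hab (by linarith)
      _ ≤ b ^ (b-1) := by
          apply Real.rpow_le_rpow_of_exponent_le (by linarith) (by linarith)
  · rw [if_neg (not_lt.2 h1a)]
    rcases lt_or_ge 1 b with h1b | h1b
    · rw [if_pos h1b]
      calc a ≤ 1 := h1a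
        _ = (1:ℝ) ^ (b-1) := (Real.one_rpow _).symm
        _ ≤ b ^ (b-1) := by
            apply Real.rpow_le_rpow zero_le_one (le_of_lt h1b) (by linarith)
    · rw [if_neg (not_lt.2 h1b)]; exact hab

lemma alpha_intervalIntegrable {x : ℝ} (hx : 0 ≤ x) :
    IntervalIntegrable alphaFn MeasureTheory.volume 0 x := by
  apply MonotoneOn.intervalIntegrable
  intro a ha b hb hab
  apply alpha_mono _ _ hab
  · simp only [Set.uIcc_of_le hx, Set.mem_Icc] at ha ⊢; exact ha.1
  · simp only [Set.uIcc_of_le hx, Set.mem_Icc] at hb ⊢; exact hb.1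

lemma Psi_nonneg (x : ℝ) : 0 ≤ PsiFn x := by
  unfold PsiFn
  apply intervalIntegral.integral_nonneg (abs_nonneg x)
  intro t ht; exact alpha_nonneg ht.1

lemma Psi_mono {a b : ℝ} (ha : 0 ≤ a) (hab : a ≤ b) : PsiFn a ≤ PsiFn b := by
  unfold PsiFn
  rw [abs_of_nonneg ha, abs_of_nonneg (le_trans ha hab)]
  exact intervalIntegral.integral_mono_interval (le_refl 0) ha hab
    ((MeasureTheory.ae_restrict_iff' measurableSet_Ioc).2 (Filter.Eventually.of_forall
      fun t ht => alpha_nonneg (le_of_lt ht.1)))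
    (alpha_intervalIntegrable (le_trans ha hab))

lemma Psi_le_mul {x : ℝ} (hx : 0 ≤ x) : PsiFn x ≤ x * alphaFn x := by
  unfold PsiFn
  rw [abs_of_nonneg hx]
  calc (∫ t in (0:ℝ)..x, alphaFn t) ≤ ∫ _t in (0:ℝ)..x, alphaFn x := by
        apply intervalIntegral.integral_mono_on hx (alpha_intervalIntegrable hx)
          intervalIntegrable_const
        intro t ht
        exact alpha_mono ht.1 hx ht.2
    _ = x * alphaFn x := by simp

lemma exp_twothirds_le : Real.exp (2/3) ≤ 2 := by
  have h1 : Real.exp 1 < 2.7182818286 := Real.exp_one_lt_d9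
  have h2 : Real.exp 2 < 8 := by
    have : Real.exp 2 = Real.exp 1 * Real.exp 1 := by
      rw [← Real.exp_add]; norm_num
    rw [this]; nlinarith [Real.exp_pos 1]
  have h3 : Real.exp (2/3) * Real.exp (2/3) * Real.exp (2/3) = Real.exp 2 := by
    rw [← Real.exp_add, ← Real.exp_add]; norm_num
  nlinarith [Real.exp_pos (2/3 : ℝ)]

lemma exp_rpow' (a y : ℝ) : Real.exp a ^ y = Real.exp (a * y) := by
  rw [← Real.exp_one_rpow a, ← Real.rpow_mul (le_of_lt (Real.exp_pos 1)),
    Real.exp_one_rpow]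

lemma pow23 : ∀ k : ℕ, 1 ≤ k → (k:ℝ) ^ ((2*(k:ℝ)/3 : ℝ)) ≤ (3/2:ℝ)^k * (Nat.factorial k) := by
  intro k hk
  induction k with
  | zero => omega
  | succ m ih =>
    rcases Nat.lt_or_ge m 2 with hm | hm
    · interval_cases m
      · norm_num
      · -- k = 2 : 2^(4/3) ≤ (3/2)^2 * 2
        have : ((2:ℕ):ℝ) ^ ((2*((2:ℕ):ℝ)/3 : ℝ)) ≤ (2:ℝ) ^ ((2:ℝ)) := by
          apply Real.rpow_le_rpow_of_exponent_le (by norm_num) (by norm_num)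
        calc ((2:ℕ):ℝ) ^ ((2*((2:ℕ):ℝ)/3 : ℝ)) ≤ (2:ℝ) ^ ((2:ℝ)) := this
          _ = 4 := by
              rw [show ((2:ℝ)) = ((2:ℕ):ℝ) by norm_num, Real.rpow_natCast]; norm_num
          _ ≤ (3/2:ℝ)^2 * (Nat.factorial 2) := by norm_num [Nat.factorial]
    · -- m ≥ 2, prove for m+1
      have hm1 : (1:ℝ) ≤ m := by exact_mod_cast Nat.one_le_of_lt hm
      have hmpos : (0:ℝ) < m := by linarith
      have ihm := ih (by omega)
      have hsplit : ((m+1:ℕ):ℝ) ^ ((2*((m+1:ℕ):ℝ)/3 : ℝ))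
          = ((m+1:ℝ)) ^ ((2:ℝ)/3) * ((m+1:ℝ)) ^ ((2*(m:ℝ)/3 : ℝ)) := by
        push_cast
        rw [← Real.rpow_add (by linarith)]
        ring_nf
      have hratio : ((m+1:ℝ)) ^ ((2*(m:ℝ)/3 : ℝ))
          ≤ 2 * (m:ℝ) ^ ((2*(m:ℝ)/3 : ℝ)) := by
        have h1 : (m+1:ℝ) = (m:ℝ) * (1 + 1/m) := by field_simp
        rw [h1, Real.mul_rpow (by linarith) (by positivity)]
        have h2 : ((1:ℝ) + 1/m) ^ ((2*(m:ℝ)/3 : ℝ)) ≤ 2 := by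
          calc ((1:ℝ) + 1/m) ^ ((2*(m:ℝ)/3 : ℝ)) ≤ (Real.exp (1/m)) ^ ((2*(m:ℝ)/3 : ℝ)) :=
                Real.rpow_le_rpow (by positivity)
                  (by linarith [Real.add_one_le_exp (1/(m:ℝ))]) (by positivity)
            _ = Real.exp (1/m * (2*(m:ℝ)/3)) := exp_rpow' _ _
            _ = Real.exp (2/3) := by congr 1; field_simp
            _ ≤ 2 := exp_twothirds_le
        calc (m:ℝ) ^ ((2*(m:ℝ)/3:ℝ)) * (1+1/m) ^ ((2*(m:ℝ)/3:ℝ))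
            ≤ (m:ℝ) ^ ((2*(m:ℝ)/3:ℝ)) * 2 := by
              apply mul_le_mul_of_nonneg_left h2 (by positivity)
          _ = 2 * (m:ℝ) ^ ((2*(m:ℝ)/3:ℝ)) := by ring
      have hcbrt : (4:ℝ)/3 ≤ ((m:ℝ)+1) ^ ((1:ℝ)/3) := by
        have h3 : ((3:ℝ)) ^ ((1:ℝ)/3) ≤ ((m:ℝ)+1) ^ ((1:ℝ)/3) := by
          apply Real.rpow_le_rpow (by norm_num) ?_ (by norm_num)
          have : (2:ℝ) ≤ m := by exact_mod_cast hm
          linarith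
        refine le_trans ?_ h3
        have h43 : ((4:ℝ)/3) = ((4/3:ℝ)^(3:ℕ)) ^ ((1:ℝ)/3) := by
          rw [← Real.rpow_natCast ((4:ℝ)/3) 3, ← Real.rpow_mul (by norm_num)]
          norm_num
        rw [h43]
        apply Real.rpow_le_rpow (by positivity) (by norm_num) (by norm_num)
      have hfront : 2 * ((m+1:ℝ)) ^ ((2:ℝ)/3) ≤ (3/2) * ((m:ℝ)+1) := by
        have hsplit2 : ((m:ℝ)+1) = ((m:ℝ)+1) ^ ((1:ℝ)/3) * ((m:ℝ)+1) ^ ((2:ℝ)/3) := by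
          rw [← Real.rpow_add (by linarith)]; norm_num
        calc 2 * ((m+1:ℝ)) ^ ((2:ℝ)/3) = (3/2) * ((4:ℝ)/3 * ((m+1:ℝ)) ^ ((2:ℝ)/3)) := by ring
          _ ≤ (3/2) * (((m:ℝ)+1) ^ ((1:ℝ)/3) * ((m+1:ℝ)) ^ ((2:ℝ)/3)) := by
              apply mul_le_mul_of_nonneg_left ?_ (by norm_num)
              apply mul_le_mul_of_nonneg_right hcbrt (by positivity)
          _ = (3/2) * ((m:ℝ)+1) := by rw [← hsplit2]
      calc ((m+1:ℕ):ℝ) ^ ((2*((m+1:ℕ):ℝ)/3 : ℝ))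
          = ((m+1:ℝ)) ^ ((2:ℝ)/3) * ((m+1:ℝ)) ^ ((2*(m:ℝ)/3 : ℝ)) := hsplit
        _ ≤ ((m+1:ℝ)) ^ ((2:ℝ)/3) * (2 * (m:ℝ) ^ ((2*(m:ℝ)/3 : ℝ))) := by
            apply mul_le_mul_of_nonneg_left hratio (by positivity)
        _ = (2 * ((m+1:ℝ)) ^ ((2:ℝ)/3)) * (m:ℝ) ^ ((2*(m:ℝ)/3 : ℝ)) := by ring
        _ ≤ ((3/2) * ((m:ℝ)+1)) * ((3/2:ℝ)^m * (Nat.factorial m)) := by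
            apply mul_le_mul hfront ihm (by positivity) (by positivity)
        _ = (3/2:ℝ)^(m+1) * ((m+1) * (Nat.factorial m)) := by ring
        _ = (3/2:ℝ)^(m+1) * (Nat.factorial (m+1)) := by
            rw [Nat.factorial_succ]; push_cast; ring

lemma psi_fact (k : ℕ) (hk : 1 ≤ k) :
    PsiFn (((k:ℝ)+1)/3) ≤ (3/2:ℝ)^k * (Nat.factorial k) := by
  rcases eq_or_lt_of_le hk with hk1 | hk2
  · -- k = 1
    subst hk1
    have ha : alphaFn (2/3) = 2/3 := by unfold alphaFn; rw [if_neg (by norm_num)]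
    have h1 : PsiFn (2/3) ≤ (2/3) * alphaFn (2/3) := Psi_le_mul (by norm_num)
    rw [ha] at h1
    norm_num
    calc PsiFn (2/3) ≤ 2/3*(2/3) := h1
      _ ≤ 3/2 := by norm_num
  · -- k ≥ 2
    have hk2' : (2:ℝ) ≤ k := by exact_mod_cast hk2
    set x : ℝ := ((k:ℝ)+1)/3 with hxdef
    have hx1 : 1 ≤ x := by rw [hxdef]; linarith
    have hx0 : 0 ≤ x := by linarith
    have h1 : PsiFn x ≤ x * alphaFn x := Psi_le_mul hx0
    have h2 : x * alphaFn x ≤ x ^ (x:ℝ) := by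
      unfold alphaFn
      split
      · rename_i hgt
        have hxpos : (0:ℝ) < x := by linarith
        calc x * x ^ (x-1) = x^(1:ℝ) * x^(x-1) := by rw [Real.rpow_one]
          _ = x^((1:ℝ)+(x-1)) := (Real.rpow_add hxpos 1 (x-1)).symm
          _ ≤ x ^ (x:ℝ) := le_of_eq (by norm_num)
      · rename_i hle
        have hx1' : x = 1 := le_antisymm (not_lt.1 hle) hx1
        rw [hx1']; simp
    have h3 : x ^ (x:ℝ) ≤ (k:ℝ) ^ (x:ℝ) := by
      apply Real.rpow_le_rpow hx0 ?_ hx0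
      rw [hxdef]; linarith
    have h4 : (k:ℝ) ^ (x:ℝ) ≤ (k:ℝ) ^ ((2*(k:ℝ)/3:ℝ)) := by
      apply Real.rpow_le_rpow_of_exponent_le (by linarith)
      rw [hxdef]; linarith
    calc PsiFn x ≤ x * alphaFn x := h1
      _ ≤ x ^ (x:ℝ) := h2
      _ ≤ (k:ℝ) ^ (x:ℝ) := h3
      _ ≤ (k:ℝ) ^ ((2*(k:ℝ)/3:ℝ)) := h4
      _ ≤ (3/2:ℝ)^k * (Nat.factorial k) := pow23 k hk

lemma alpha_third : alphaFn (1/3) = 1/3 := by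
  unfold alphaFn; rw [if_neg (by norm_num)]


lemma add_pow_ge (x y : ℝ) (hx : 0 ≤ x) (hy : 0 ≤ y) :
    ∀ n : ℕ, x^(n+1) + (n+1)*y*x^n ≤ (x+y)^(n+1) := by
  intro n
  induction n with
  | zero => simp
  | succ m ih =>
    have hxn : 0 ≤ x^m := pow_nonneg hx m
    have key : x^(m+1+1) + ((m:ℝ)+1+1)*y*x^(m+1)
        ≤ (x+y) * (x^(m+1) + ((m:ℝ)+1)*y*x^m) := by
      have e1 : x^(m+1) = x * x^m := by ring
      have e2 : x^(m+1+1) = x * x * x^m := by ring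
      rw [e1, e2]
      nlinarith [mul_nonneg (mul_nonneg hy hy) hxn, mul_nonneg (mul_nonneg hy hy)
        (mul_nonneg (Nat.cast_nonneg m : (0:ℝ) ≤ m) hxn)]
    calc x^(m+1+1) + (((m+1:ℕ):ℝ)+1)*y*x^(m+1)
        = x^(m+1+1) + ((m:ℝ)+1+1)*y*x^(m+1) := by push_cast; ring
      _ ≤ (x+y) * (x^(m+1) + ((m:ℝ)+1)*y*x^m) := key
      _ ≤ (x+y) * (x+y)^(m+1) := by
          apply mul_le_mul_of_nonneg_left ?_ (by linarith)
          calc x^(m+1) + ((m:ℝ)+1)*y*x^m = x^(m+1) + (((m:ℕ):ℝ)+1)*y*x^m := by push_cast; ring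
            _ ≤ (x+y)^(m+1) := ih
      _ = (x+y)^(m+1+1) := by ring

lemma esymm_le {ι : Type*} [DecidableEq ι] (p : ι → ℝ) (hp : ∀ i, 0 ≤ p i) (u : Finset ι) :
    ∀ k : ℕ, ∑ T ∈ u.powersetCard k, ∏ i ∈ T, p i
      ≤ (∑ i ∈ u, p i)^k / (Nat.factorial k) := by
  induction u using Finset.induction with
  | empty =>
    intro k
    cases k with
    | zero => simp
    | succ m =>
      rw [Finset.powersetCard_eq_empty.2 (by simp)]
      simp only [Finset.sum_empty]
      positivity
  | @insert a u ha ih =>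
    intro k
    cases k with
    | zero => simp
    | succ m =>
      have hs' : 0 ≤ ∑ i ∈ u, p i := Finset.sum_nonneg fun i _ => hp i
      rw [Finset.powersetCard_succ_insert ha]
      rw [Finset.sum_union]
      · rw [Finset.sum_image]
        · have h2 : ∑ T ∈ u.powersetCard m, ∏ i ∈ insert a T, p i
              = p a * ∑ T ∈ u.powersetCard m, ∏ i ∈ T, p i := by
            rw [Finset.mul_sum]
            apply Finset.sum_congr rfl
            intro T hT
            have haT : a ∉ T := fun h =>
              ha ((Finset.mem_powersetCard.1 hT).1 h)
            rw [Finset.prod_insert haT]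
          rw [h2, Finset.sum_insert ha]
          have hb1 := ih (m+1)
          have hb2 := ih m
          have hkey := add_pow_ge (∑ i ∈ u, p i) (p a) hs' (hp a) m
          have hfact : ((Nat.factorial (m+1) : ℝ)) = ((m:ℝ)+1) * (Nat.factorial m) := by
            rw [Nat.factorial_succ]; push_cast; ring
          have hfpos : (0:ℝ) < Nat.factorial (m+1) := by positivity
          have hfpos' : (0:ℝ) < Nat.factorial m := by positivity
          calc (∑ T ∈ u.powersetCard (m+1), ∏ i ∈ T, p i)
                + p a * ∑ T ∈ u.powersetCard m, ∏ i ∈ T, p i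
              ≤ (∑ i ∈ u, p i)^(m+1) / (Nat.factorial (m+1))
                + p a * ((∑ i ∈ u, p i)^m / (Nat.factorial m)) := by
                apply add_le_add hb1
                exact mul_le_mul_of_nonneg_left hb2 (hp a)
            _ = ((∑ i ∈ u, p i)^(m+1) + ((m:ℝ)+1) * p a * (∑ i ∈ u, p i)^m)
                  / (Nat.factorial (m+1)) := by
                rw [hfact]; field_simp
            _ ≤ (∑ i ∈ u, p i + p a)^(m+1) / (Nat.factorial (m+1)) := by
                apply div_le_div_of_nonneg_right hkey (le_of_lt hfpos)
            _ = (p a + ∑ i ∈ u, p i)^(m+1) / (Nat.factorial (m+1)) := by ring_nf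
        · intro T hT T' hT' hE
          have haT : a ∉ T := fun h => ha ((Finset.mem_powersetCard.1 hT).1 h)
          have haT' : a ∉ T' := fun h => ha ((Finset.mem_powersetCard.1 hT').1 h)
          have := congrArg (Finset.erase · a) hE
          simpa [Finset.erase_insert haT, Finset.erase_insert haT'] using this
      · rw [Finset.disjoint_left]
        intro T hT hT2
        have haT : a ∉ T := fun h => ha ((Finset.mem_powersetCard.1 hT).1 h)
        obtain ⟨T', hT', rfl⟩ := Finset.mem_image.1 hT2
        exact haT (Finset.mem_insert_self a T')

section Ind
variable {Ω : Type*} [MeasurableSpace Ω] {μ : Measure Ω} {n : ℕ}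
  {A : Set Ω} {B : Fin n → Set Ω}

lemma ind_inter (hInd : iIndepSet (Fin.cases A B) μ) (T : Finset (Fin n)) :
    μ (A ∩ ⋂ i ∈ T, B i) = μ A * ∏ i ∈ T, μ (B i) := by
  have h := hInd.meas_biInter (insert 0 (T.image Fin.succ))
  have h0 : (0 : Fin (n+1)) ∉ T.image Fin.succ := by
    simp [Fin.succ_ne_zero]
  rw [Finset.set_biInter_insert, Finset.prod_insert h0] at h
  have him : ⋂ j ∈ T.image Fin.succ, (Fin.cases A B : Fin (n+1) → Set Ω) j
      = ⋂ i ∈ T, B i := by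
    rw [Finset.set_biInter_finset_image]
    simp
  have him2 : ∏ j ∈ T.image Fin.succ, μ ((Fin.cases A B : Fin (n+1) → Set Ω) j)
      = ∏ i ∈ T, μ (B i) := by
    rw [Finset.prod_image (fun a _ b _ h => Fin.succ_injective n h)]
    simp
  rw [him, him2] at h
  simpa using h

lemma ind_compl (hA : MeasurableSet A) (hB : ∀ i, MeasurableSet (B i))
    (hInd : iIndepSet (Fin.cases A B) μ) :
    μ (A ∩ ⋂ i, (B i)ᶜ) = μ A * ∏ i, μ ((B i)ᶜ) := by
  have hInd' : iIndep (fun i => MeasurableSpace.generateFrom {(Fin.cases A B : Fin (n+1) → Set Ω) i}) μ :=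
    (iIndepSet_iff_iIndep _ _).1 hInd
  have h := hInd'.meas_iInter (s := Fin.cases A (fun i => (B i)ᶜ)) ?_
  · have hset : (⋂ j, (Fin.cases A (fun i => (B i)ᶜ) : Fin (n+1) → Set Ω) j)
        = A ∩ ⋂ i, (B i)ᶜ := by
      ext x
      simp only [Set.mem_iInter, Set.mem_inter_iff]
      rw [Fin.forall_fin_succ]
      simp
    have hprod : ∏ j, μ ((Fin.cases A (fun i => (B i)ᶜ) : Fin (n+1) → Set Ω) j)
        = μ A * ∏ i, μ ((B i)ᶜ) := by
      rw [Fin.prod_univ_succ]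
      simp
    rw [hset, hprod] at h
    exact h
  · intro j
    induction j using Fin.cases with
    | zero =>
      simp only [Fin.cases_zero]
      exact MeasurableSpace.measurableSet_generateFrom rfl
    | succ i =>
      simp only [Fin.cases_succ]
      exact (MeasurableSpace.measurableSet_generateFrom (Set.mem_singleton _)).compl

end Ind

lemma geom34 : ∀ n : ℕ, ∑ k ∈ Finset.range n, (3/4:ℝ)^k ≤ 4 := by
  intro n
  have h : ∀ m : ℕ, ∑ k ∈ Finset.range m, (3/4:ℝ)^k = 4 - 4*(3/4)^m := by
    intro m
    induction m with
    | zero => simp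
    | succ l ih => rw [Finset.sum_range_succ, ih]; ring
  rw [h n]
  have : (0:ℝ) ≤ (3/4)^n := by positivity
  linarith


/-- **Exponential estimate for independent sets (Lemma 2).** There is an absolute constant
`C > 0` such that: if `A, A_1, …, A_n` are independent sets in a probability space with
`∑ μ(A_k) ≤ 1/2` and `E = A ∩ ⋃ A_k`, then
`∫_E Ψ((1/3)(1 + ∑ 𝟙_{A_k})) dμ ≤ C·μ(E)`. -/
theorem psi_integral_le_of_iIndepSet :
    ∃ C : ℝ, 0 < C ∧
      ∀ (Ω : Type u) (_ : MeasurableSpace Ω) (μ : Measure Ω), IsProbabilityMeasure μ →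
        ∀ (n : ℕ) (A : Set Ω) (B : Fin n → Set Ω),
          MeasurableSet A → (∀ i, MeasurableSet (B i)) →
          iIndepSet (Fin.cases A B) μ →
          (∑ i, μ (B i)) ≤ 1 / 2 →
          ∫ x in A ∩ ⋃ i, B i,
              PsiFn ((1 / 3) * (1 + ∑ i, (B i).indicator (fun _ => (1:ℝ)) x)) ∂μ ≤
            C * (μ (A ∩ ⋃ i, B i)).toReal := by
  classical
  refine ⟨13, by norm_num, ?_⟩
  intro Ω mΩ μ hprob n A B hA hB hInd hsum
  set E : Set Ω := A ∩ ⋃ i, B i with hE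
  have hEmeas : MeasurableSet E := hA.inter (MeasurableSet.iUnion hB)
  set g : ℕ → ℝ := fun k => PsiFn (((k:ℝ)+1)/3) with hgdef
  have hgnn : ∀ k, 0 ≤ g k := fun k => Psi_nonneg _
  -- real-valued probabilities
  set p : Fin n → ℝ := fun i => (μ (B i)).toReal with hpdef
  have hpnn : ∀ i, 0 ≤ p i := fun i => ENNReal.toReal_nonneg
  set s : ℝ := ∑ i, p i with hsdef
  have hBfin : ∀ i, μ (B i) ≠ ⊤ := fun i => measure_ne_top μ _
  have hs12 : s ≤ 1/2 := by
    have h1 : (∑ i, μ (B i)).toReal ≤ ((1:ENNReal)/2).toReal :=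
      ENNReal.toReal_mono (by norm_num) hsum
    rw [ENNReal.toReal_sum (fun i _ => hBfin i)] at h1
    calc s = ∑ i, (μ (B i)).toReal := rfl
      _ ≤ ((1:ENNReal)/2).toReal := h1
      _ = 1/2 := by norm_num
  have hsnn : 0 ≤ s := Finset.sum_nonneg fun i _ => hpnn i
  set pA : ℝ := (μ A).toReal with hpAdef
  set pE : ℝ := (μ E).toReal with hpEdef
  have hpAnn : 0 ≤ pA := ENNReal.toReal_nonneg
  have hpEnn : 0 ≤ pE := ENNReal.toReal_nonneg
  -- lower bound : pA * s ≤ 2 * pE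
  have hlow : pA * s ≤ 2 * pE := by
    have hsplit : μ E + μ (A ∩ ⋂ i, (B i)ᶜ) = μ A := by
      have hd : A ∩ ⋂ i, (B i)ᶜ = A \ (⋃ i, B i) := by
        rw [Set.diff_eq, Set.compl_iUnion]
      rw [hd, hE]
      exact measure_inter_add_diff A (MeasurableSet.iUnion hB)
    have hAc : (μ (A ∩ ⋂ i, (B i)ᶜ)).toReal = pA * ∏ i, (1 - p i) := by
      rw [ind_compl hA hB hInd, ENNReal.toReal_mul, ENNReal.toReal_prod]
      congr 1
      apply Finset.prod_congr rfl
      intro i _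
      rw [measure_compl (hB i) (hBfin i), measure_univ,
        ENNReal.toReal_sub_of_le prob_le_one ENNReal.one_ne_top]
      simp; rfl
    have hEreal : pE = pA - pA * ∏ i, (1 - p i) := by
      have h2 := congrArg ENNReal.toReal hsplit
      rw [ENNReal.toReal_add (measure_ne_top μ _) (measure_ne_top μ _), hAc] at h2
      rw [← hpEdef] at h2
      rw [← hpAdef] at h2
      linarith
    have hpile : ∀ i, p i ≤ 1/2 := fun i =>
      le_trans (Finset.single_le_sum (fun j _ => hpnn j) (Finset.mem_univ i)) hs12
    have hprod_le : ∏ i, (1 - p i) ≤ 1 - s/2 := by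
      have hstep : ∏ i, (1 - p i) ≤ ∏ i, Real.exp (-(p i)) := by
        apply Finset.prod_le_prod
        · intro i _; linarith [hpile i]
        · intro i _; linarith [Real.add_one_le_exp (-(p i))]
      have hexp : ∏ i, Real.exp (-(p i)) = Real.exp (-s) := by
        rw [← Real.exp_sum, hsdef, ← Finset.sum_neg_distrib]
      have hfinal : Real.exp (-s) ≤ 1 - s/2 := by
        have h1 : 1 + s ≤ Real.exp s := by linarith [Real.add_one_le_exp s]
        have hep : (0:ℝ) < Real.exp s := Real.exp_pos s
        rw [Real.exp_neg, inv_le_iff_one_le_mul₀ hep]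
        nlinarith
      calc ∏ i, (1 - p i) ≤ ∏ i, Real.exp (-(p i)) := hstep
        _ = Real.exp (-s) := hexp
        _ ≤ 1 - s/2 := hfinal
    nlinarith
  -- counting function
  set N : Ω → ℕ := fun x => ∑ i, if x ∈ B i then 1 else 0 with hNdef
  have hNmeas : Measurable N := by
    apply Finset.measurable_sum
    intro i _
    exact Measurable.ite (hB i) measurable_const measurable_const
  have hNle : ∀ x, N x ≤ n := by
    intro x
    calc N x ≤ ∑ _i : Fin n, 1 := Finset.sum_le_sum (fun i _ => by split <;> omega)
      _ = n := by simp
  have hfun : ∀ x, PsiFn ((1 / 3) * (1 + ∑ i, (B i).indicator (fun _ => (1:ℝ)) x))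
      = g (N x) := by
    intro x
    have hcast : (∑ i, (B i).indicator (fun _ => (1:ℝ)) x) = (N x : ℝ) := by
      rw [hNdef]
      push_cast
      apply Finset.sum_congr rfl
      intro i _
      simp [Set.indicator_apply]
    rw [hcast, hgdef]
    congr 1
    ring
  -- sets S k
  have hSmeas : ∀ k : ℕ, MeasurableSet {x | k+1 ≤ N x} := by
    intro k
    exact hNmeas measurableSet_Ici
  set G : Ω → ℝ := fun x => g 0 + ∑ k ∈ Finset.range n,
    ({y | k+1 ≤ N y}).indicator (fun _ => g (k+1)) x with hGdef
  have hpt : ∀ m : ℕ, m ≤ n →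
      g m ≤ g 0 + ∑ k ∈ Finset.range n, (if k+1 ≤ m then g (k+1) else 0) := by
    intro m hm
    have htel : ∑ k ∈ Finset.range m, (g (k+1) - g k) = g m - g 0 :=
      Finset.sum_range_sub g m
    have h1 : ∑ k ∈ Finset.range m, (g (k+1) - g k)
        ≤ ∑ k ∈ Finset.range m, (if k+1 ≤ m then g (k+1) else 0) := by
      apply Finset.sum_le_sum
      intro k hk
      rw [if_pos (Nat.succ_le_of_lt (Finset.mem_range.1 hk))]
      linarith [hgnn k]
    have h2 : ∑ k ∈ Finset.range m, (if k+1 ≤ m then g (k+1) else 0)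
        ≤ ∑ k ∈ Finset.range n, (if k+1 ≤ m then g (k+1) else 0) := by
      apply Finset.sum_le_sum_of_subset_of_nonneg (Finset.range_subset_range.2 hm)
      intro k _ _
      split
      · exact hgnn _
      · exact le_refl 0
    linarith
  have hGpt : ∀ x, g (N x) ≤ G x := by
    intro x
    have h := hpt (N x) (hNle x)
    rw [hGdef]
    have heq : ∀ k, ({y | k+1 ≤ N y}).indicator (fun _ => g (k+1)) x
        = (if k+1 ≤ N x then g (k+1) else 0) := by
      intro k
      simp [Set.indicator_apply]
    calc g (N x) ≤ g 0 + ∑ k ∈ Finset.range n, (if k+1 ≤ N x then g (k+1) else 0) := h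
      _ = g 0 + ∑ k ∈ Finset.range n,
          ({y | k+1 ≤ N y}).indicator (fun _ => g (k+1)) x := by
        congr 1
        exact (Finset.sum_congr rfl fun k _ => heq k).symm
  have hGint : Integrable G μ := by
    apply Integrable.add (integrable_const (g 0))
    apply integrable_finset_sum
    intro k _
    exact (integrable_const (g (k+1))).indicator (hSmeas k)
  have hfint : Integrable (fun x => g (N x)) μ := by
    have hmeas : Measurable fun x => g (N x) :=
      (measurable_from_nat (f := g)).comp hNmeas
    apply Integrable.mono' hGint hmeas.aestronglyMeasurable
    apply Filter.Eventually.of_forall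
    intro x
    rw [Real.norm_eq_abs, abs_of_nonneg (hgnn _)]
    exact hGpt x
  have hmono : ∫ x in E, g (N x) ∂μ ≤ ∫ x in E, G x ∂μ :=
    setIntegral_mono_on hfint.integrableOn hGint.integrableOn hEmeas (fun x _ => hGpt x)
  have hGval : ∫ x in E, G x ∂μ
      = g 0 * pE + ∑ k ∈ Finset.range n, g (k+1) * (μ ({x | k+1 ≤ N x} ∩ E)).toReal := by
    rw [hGdef]
    rw [integral_add (integrable_const (g 0)).integrableOn
      (integrable_finset_sum _ fun k _ =>
        (integrable_const (g (k+1))).indicator (hSmeas k)).integrableOn]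
    rw [setIntegral_const, integral_finset_sum _ (fun k _ =>
      ((integrable_const (g (k+1))).indicator (hSmeas k)).integrableOn)]
    congr 1
    · rw [smul_eq_mul, mul_comm]; rfl
    · apply Finset.sum_congr rfl
      intro k _
      rw [integral_indicator_const _ (hSmeas k), measureReal_restrict_apply (hSmeas k),
        smul_eq_mul, mul_comm]; rfl
  have hSbound : ∀ k : ℕ, (μ ({x | k+1 ≤ N x} ∩ E)).toReal
      ≤ pA * (s^(k+1) / (Nat.factorial (k+1))) := by
    intro k
    have hsub : {x | k+1 ≤ N x} ∩ E ⊆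
        ⋃ T ∈ (Finset.univ : Finset (Fin n)).powersetCard (k+1), (A ∩ ⋂ i ∈ T, B i) := by
      rintro x ⟨hx1, hx2, -⟩
      have hcard : k+1 ≤ (Finset.univ.filter (fun i => x ∈ B i)).card := by
        rw [Finset.card_filter]
        exact hx1
      obtain ⟨T, hTsub, hTcard⟩ := Finset.exists_subset_card_eq hcard
      apply Set.mem_biUnion (Finset.mem_powersetCard.2 ⟨Finset.subset_univ T, hTcard⟩)
      refine ⟨hx2, ?_⟩
      simp only [Set.mem_iInter]
      intro i hi
      exact (Finset.mem_filter.1 (hTsub hi)).2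
    have hstep1 : μ ({x | k+1 ≤ N x} ∩ E)
        ≤ ∑ T ∈ (Finset.univ : Finset (Fin n)).powersetCard (k+1), μ (A ∩ ⋂ i ∈ T, B i) :=
      le_trans (measure_mono hsub) (measure_biUnion_finset_le _ _)
    have hne : (∑ T ∈ (Finset.univ : Finset (Fin n)).powersetCard (k+1),
        μ (A ∩ ⋂ i ∈ T, B i)) ≠ ⊤ :=
      ENNReal.sum_ne_top.2 fun T _ => measure_ne_top μ _
    calc (μ ({x | k+1 ≤ N x} ∩ E)).toReal
        ≤ (∑ T ∈ (Finset.univ : Finset (Fin n)).powersetCard (k+1),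
            μ (A ∩ ⋂ i ∈ T, B i)).toReal := ENNReal.toReal_mono hne hstep1
      _ = ∑ T ∈ (Finset.univ : Finset (Fin n)).powersetCard (k+1),
            (μ (A ∩ ⋂ i ∈ T, B i)).toReal :=
          ENNReal.toReal_sum fun T _ => measure_ne_top μ _
      _ = ∑ T ∈ (Finset.univ : Finset (Fin n)).powersetCard (k+1), pA * ∏ i ∈ T, p i := by
          apply Finset.sum_congr rfl
          intro T _
          rw [ind_inter hInd, ENNReal.toReal_mul, ENNReal.toReal_prod]
      _ = pA * ∑ T ∈ (Finset.univ : Finset (Fin n)).powersetCard (k+1), ∏ i ∈ T, p i := by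
          rw [Finset.mul_sum]
      _ ≤ pA * (s^(k+1) / (Nat.factorial (k+1))) := by
          apply mul_le_mul_of_nonneg_left ?_ hpAnn
          exact esymm_le p hpnn Finset.univ (k+1)
  -- final assembly
  have hterm : ∀ k : ℕ, g (k+1) * (pA * (s^(k+1) / (Nat.factorial (k+1))))
      ≤ pA * s * ((3/2) * (3/4)^k) := by
    intro k
    have hg := psi_fact (k+1) (by omega)
    have hfpos : (0:ℝ) < Nat.factorial (k+1) := by positivity
    have hspow : s^(k+1) ≤ s * (1/2)^k := by
      calc s^(k+1) = s * s^k := by ring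
        _ ≤ s * (1/2)^k := by
            apply mul_le_mul_of_nonneg_left (pow_le_pow_left₀ hsnn hs12 k) hsnn
    calc g (k+1) * (pA * (s^(k+1) / (Nat.factorial (k+1))))
        ≤ ((3/2:ℝ)^(k+1) * (Nat.factorial (k+1))) * (pA * ((s * (1/2)^k) / (Nat.factorial (k+1)))) := by
          apply mul_le_mul hg ?_ ?_ (by positivity)
          · apply mul_le_mul_of_nonneg_left ?_ hpAnn
            apply div_le_div_of_nonneg_right hspow (le_of_lt hfpos)
          · positivity
      _ = pA * s * ((3/2)^(k+1) * (1/2)^k) := by field_simp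
      _ = pA * s * ((3/2) * (3/4)^k) := by
          congr 1
          rw [pow_succ]
          rw [show ((3:ℝ)/4) = (3/2) * (1/2) by norm_num, mul_pow]
          ring
  have hg0le : g 0 ≤ 1 := by
    have h1 : g 0 = PsiFn (1/3) := by rw [hgdef]; norm_num
    have h2 : PsiFn (1/3) ≤ (1/3) * alphaFn (1/3) := Psi_le_mul (by norm_num)
    rw [h1, alpha_third] at *
    linarith
  have hEfun : (fun x => PsiFn ((1 / 3) * (1 + ∑ i, (B i).indicator (fun _ => (1:ℝ)) x)))
      = fun x => g (N x) := funext hfun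
  calc ∫ x in E, PsiFn ((1 / 3) * (1 + ∑ i, (B i).indicator (fun _ => (1:ℝ)) x)) ∂μ
      = ∫ x in E, g (N x) ∂μ := by rw [hEfun]
    _ ≤ ∫ x in E, G x ∂μ := hmono
    _ = g 0 * pE + ∑ k ∈ Finset.range n, g (k+1) * (μ ({x | k+1 ≤ N x} ∩ E)).toReal := hGval
    _ ≤ g 0 * pE + ∑ k ∈ Finset.range n, pA * s * ((3/2) * (3/4)^k) := by
        apply add_le_add_right
        apply Finset.sum_le_sum
        intro k _
        calc g (k+1) * (μ ({x | k+1 ≤ N x} ∩ E)).toReal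
            ≤ g (k+1) * (pA * (s^(k+1) / (Nat.factorial (k+1)))) :=
              mul_le_mul_of_nonneg_left (hSbound k) (hgnn _)
          _ ≤ pA * s * ((3/2) * (3/4)^k) := hterm k
    _ ≤ 1 * pE + (pA * s) * 6 := by
        apply add_le_add (mul_le_mul_of_nonneg_right hg0le hpEnn)
        calc ∑ k ∈ Finset.range n, pA * s * ((3/2) * (3/4:ℝ)^k)
            = ∑ k ∈ Finset.range n, (3/4:ℝ)^k * (pA * s * (3/2)) :=
              Finset.sum_congr rfl (fun k _ => by ring)
          _ = (∑ k ∈ Finset.range n, (3/4:ℝ)^k) * (pA * s * (3/2)) := by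
              rw [← Finset.sum_mul]
          _ ≤ 4 * (pA * s * (3/2)) := by
              apply mul_le_mul_of_nonneg_right (geom34 n) (by positivity)
          _ = (pA * s) * 6 := by ring
    _ ≤ 1 * pE + (2 * pE) * 6 := by
        apply add_le_add (le_refl _)
        apply mul_le_mul_of_nonneg_right hlow (by norm_num)
    _ = 13 * pE := by ring
end

section
/- Let (X, m) be a probability space and (T_n) a sequence of linear operators from L¹(X,m) to measurable functions on X satisfying: (1) f ≥ 0 implies T_n f ≥ 0; (2) T_n 𝟙_X = 1; and (3) for every ε > 0 there exists δ > 0 such that if E ⊆ X is measurable with m(E) < δ then m({x : T_n 𝟙_E(x) > ε}) < ε for all n. If (T_n) is δ-sweeping out for every 0 < δ < 1, then (T_n) is strong sweeping out. -/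
open MeasureTheory Filter Set Topology
open scoped symmDiff ENNReal

set_option linter.unusedSectionVars false

namespace SSOAux

variable {X : Type*} [MeasurableSpace X] {m : Measure X} [IsProbabilityMeasure m]
  {T : ℕ → (X → ℝ) → (X → ℝ)}

/-- real-valued indicator -/
noncomputable def ind (S : Set X) : X → ℝ := S.indicator fun _ => 1

lemma ind_int {S : Set X} (hS : MeasurableSet S) : Integrable (ind S) m :=
  (integrable_const (1:ℝ)).indicator hS

lemma ind_nonneg (S : Set X) (x : X) : 0 ≤ ind S x := by
  by_cases h : x ∈ S <;> simp [ind, h]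

lemma ind_le_one (S : Set X) (x : X) : ind S x ≤ 1 := by
  by_cases h : x ∈ S <;> simp [ind, h]

lemma ind_le_add_symmDiff (S S' : Set X) (x : X) :
    ind S x ≤ ind S' x + ind (S ∆ S') x := by
  by_cases h : x ∈ S <;> by_cases h' : x ∈ S' <;>
    simp [ind, h, h', Set.mem_symmDiff]

lemma ind_add_compl (S : Set X) (x : X) : ind S x + ind Sᶜ x = 1 := by
  by_cases h : x ∈ S <;> simp [ind, h]

lemma T_mono
    (hadd : ∀ n f g, Integrable f m → Integrable g m →
      T n (fun x => f x + g x) = fun x => T n f x + T n g x)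
    (hpos : ∀ n f, Integrable f m → (∀ x, 0 ≤ f x) → ∀ x, 0 ≤ T n f x)
    {n : ℕ} {f g : X → ℝ} (hf : Integrable f m) (hg : Integrable g m)
    (h : ∀ x, f x ≤ g x) : ∀ x, T n f x ≤ T n g x := by
  intro x
  have h1 : Integrable (fun x => g x - f x) m := hg.sub hf
  have h2 := hadd n f (fun x => g x - f x) hf h1
  have h3 : (fun x => f x + (g x - f x)) = g := by funext y; ring
  rw [h3] at h2
  have h4 := hpos n (fun x => g x - f x) h1 (fun y => sub_nonneg.2 (h y)) x
  have h5 : T n g x = T n f x + T n (fun x => g x - f x) x := by rw [h2]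
  linarith

section
variable
    (hadd : ∀ n f g, Integrable f m → Integrable g m →
      T n (fun x => f x + g x) = fun x => T n f x + T n g x)
    (hpos : ∀ n f, Integrable f m → (∀ x, 0 ≤ f x) → ∀ x, 0 ≤ T n f x)
    (hone : ∀ n : ℕ, T n (fun _ => (1:ℝ)) = fun _ => 1)

include hadd hpos hone

lemma fT_nonneg (n : ℕ) {S : Set X} (hS : MeasurableSet S) (x : X) :
    0 ≤ T n (ind S) x :=
  hpos n _ (ind_int hS) (ind_nonneg S) x

lemma fT_le_one (n : ℕ) {S : Set X} (hS : MeasurableSet S) (x : X) :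
    T n (ind S) x ≤ 1 := by
  have h := T_mono hadd hpos (ind_int hS) (integrable_const 1) (ind_le_one S) (n := n) x
  rwa [hone n] at h

lemma fT_mono (n : ℕ) {S S' : Set X} (hS : MeasurableSet S) (hS' : MeasurableSet S')
    (hsub : S ⊆ S') (x : X) : T n (ind S) x ≤ T n (ind S') x := by
  refine T_mono hadd hpos (ind_int hS) (ind_int hS') (fun y => ?_) x
  by_cases h : y ∈ S
  · simp [ind, h, hsub h]
  · simpa [ind, h] using ind_nonneg S' y

lemma fT_subadd (n : ℕ) {S S' : Set X} (hS : MeasurableSet S) (hS' : MeasurableSet S')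
    (x : X) : T n (ind S) x ≤ T n (ind S') x + T n (ind (S ∆ S')) x := by
  have hΔ : MeasurableSet (S ∆ S') := (hS.diff hS').union (hS'.diff hS)
  have h1 : ∀ y, ind S y ≤ (fun y => ind S' y + ind (S ∆ S') y) y :=
    fun y => ind_le_add_symmDiff S S' y
  have h2 := T_mono hadd hpos (n := n) (g := fun y => ind S' y + ind (S ∆ S') y)
    (ind_int hS) (by exact (ind_int hS').add (ind_int hΔ)) h1 x
  have h3 := hadd n (ind S') (ind (S ∆ S')) (ind_int hS') (ind_int hΔ)
  rw [h3] at h2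
  exact h2

lemma fT_compl (n : ℕ) {S : Set X} (hS : MeasurableSet S) (x : X) :
    T n (ind Sᶜ) x = 1 - T n (ind S) x := by
  have h3 := hadd n (ind S) (ind Sᶜ) (ind_int hS) (ind_int hS.compl)
  have h4 : (fun y => ind S y + ind Sᶜ y) = (fun _ => (1:ℝ)) := by
    funext y; exact ind_add_compl S y
  rw [h4, hone n] at h3
  have h5 : (1:ℝ) = T n (ind S) x + T n (ind Sᶜ) x := congrFun h3 x
  linarith


omit hadd hpos hone in
lemma measure_bad_le (N M : ℕ) (bad : ℕ → Set X) {γ : ℝ}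
    (hper : ∀ n, m (bad n) ≤ ENNReal.ofReal γ) :
    m (⋃ n ∈ Finset.Icc N M, bad n) ≤ (M + 1) * ENNReal.ofReal γ := by
  refine (measure_biUnion_finset_le _ _).trans ?_
  have h1 : ∀ n ∈ Finset.Icc N M, m (bad n) ≤ ENNReal.ofReal γ := fun n _ => hper n
  refine (Finset.sum_le_card_nsmul _ _ _ h1).trans ?_
  rw [nsmul_eq_mul, Nat.card_Icc]
  refine mul_le_mul_left ?_ _
  have : ((M + 1 - N : ℕ) : ℝ≥0∞) ≤ ((M + 1 : ℕ) : ℝ≥0∞) := Nat.cast_le.2 (Nat.sub_le (M+1) N)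
  exact_mod_cast this

lemma stab_le {S S' : Set X} (hS : MeasurableSet S) (hS' : MeasurableSet S')
    {γ c : ℝ} (N M : ℕ)
    (hper : ∀ n, m {x | γ < T n (ind (S ∆ S')) x} ≤ ENNReal.ofReal γ) :
    m (⋂ n ∈ Finset.Icc N M, {x | T n (ind S) x ≤ c}) ≤
      m (⋂ n ∈ Finset.Icc N M, {x | T n (ind S') x ≤ c + γ}) + (M + 1) * ENNReal.ofReal γ := by
  have hsub : (⋂ n ∈ Finset.Icc N M, {x | T n (ind S) x ≤ c}) ⊆
      (⋂ n ∈ Finset.Icc N M, {x | T n (ind S') x ≤ c + γ}) ∪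
      (⋃ n ∈ Finset.Icc N M, {x | γ < T n (ind (S ∆ S')) x}) := by
    intro x hx
    simp only [Set.mem_iInter, Set.mem_setOf_eq] at hx
    by_cases hbad : ∃ n ∈ Finset.Icc N M, γ < T n (ind (S ∆ S')) x
    · obtain ⟨n, hn, h⟩ := hbad
      exact Or.inr (Set.mem_biUnion hn h)
    · left
      push_neg at hbad
      simp only [Set.mem_iInter, Set.mem_setOf_eq]
      intro n hn
      have h1 := fT_subadd hadd hpos hone n hS' hS x
      rw [symmDiff_comm] at h1
      have h2 := hx n hn
      have h3 := hbad n hn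
      linarith
  refine (measure_mono hsub).trans ?_
  refine (measure_union_le _ _).trans ?_
  exact add_le_add_right (measure_bad_le N M _ (fun n => hper n)) _

lemma stab_ge {S S' : Set X} (hS : MeasurableSet S) (hS' : MeasurableSet S')
    {γ c : ℝ} (N M : ℕ)
    (hper : ∀ n, m {x | γ < T n (ind (S ∆ S')) x} ≤ ENNReal.ofReal γ) :
    m (⋂ n ∈ Finset.Icc N M, {x | c ≤ T n (ind S) x}) ≤
      m (⋂ n ∈ Finset.Icc N M, {x | c - γ ≤ T n (ind S') x}) + (M + 1) * ENNReal.ofReal γ := by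
  have hsub : (⋂ n ∈ Finset.Icc N M, {x | c ≤ T n (ind S) x}) ⊆
      (⋂ n ∈ Finset.Icc N M, {x | c - γ ≤ T n (ind S') x}) ∪
      (⋃ n ∈ Finset.Icc N M, {x | γ < T n (ind (S ∆ S')) x}) := by
    intro x hx
    simp only [Set.mem_iInter, Set.mem_setOf_eq] at hx
    by_cases hbad : ∃ n ∈ Finset.Icc N M, γ < T n (ind (S ∆ S')) x
    · obtain ⟨n, hn, h⟩ := hbad
      exact Or.inr (Set.mem_biUnion hn h)
    · left
      push_neg at hbad
      simp only [Set.mem_iInter, Set.mem_setOf_eq]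
      intro n hn
      have h1 := fT_subadd hadd hpos hone n hS hS' x
      have h2 := hx n hn
      have h3 := hbad n hn
      linarith
  refine (measure_mono hsub).trans ?_
  refine (measure_union_le _ _).trans ?_
  exact add_le_add_right (measure_bad_le N M _ (fun n => hper n)) _


noncomputable def q (j : ℕ) : ℝ := 1 / (j + 1)

omit hadd hpos hone in
lemma q_pos (j : ℕ) : 0 < q j := by
  have : (0:ℝ) < (j:ℝ) + 1 := by positivity
  simpa [q] using this

omit hadd hpos hone in
lemma q_le_one (j : ℕ) : q j ≤ 1 := by
  rw [q, div_le_one (by positivity)]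
  have := Nat.cast_nonneg (α := ℝ) j
  linarith

omit hadd hpos hone in
lemma q_anti {k j : ℕ} (h : k ≤ j) : q j ≤ q k := by
  apply one_div_le_one_div_of_le (by positivity)
  have : (k:ℝ) ≤ (j:ℝ) := Nat.cast_le.2 h
  linarith

lemma exists_step
    (hmeas : ∀ n f, Integrable f m → Measurable (T n f))
    (habs : ∀ ε : ℝ, 0 < ε → ∃ δ : ℝ, 0 < δ ∧
      ∀ E : Set X, MeasurableSet E → m E < ENNReal.ofReal δ →
        ∀ n, m {x | ε < T n (E.indicator fun _ => (1:ℝ)) x} < ENNReal.ofReal ε)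
    (hsweep : ∀ δ : ℝ, 0 < δ → δ < 1 → ∀ ε : ℝ, 0 < ε →
      ∃ E : Set X, MeasurableSet E ∧ m E < ENNReal.ofReal ε ∧
        ∀ᵐ x ∂m, δ ≤ limsup (fun n => T n (E.indicator fun _ => (1:ℝ)) x) atTop)
    (j : ℕ) (E : Set X) (r : ℝ) :
    ∃ (A B : Set X) (M M' : ℕ) (r' d1 d2 : ℝ),
      MeasurableSet E → 0 < r →
      (MeasurableSet A ∧ m A < ENNReal.ofReal (r/4)) ∧
      (MeasurableSet B ∧ m B < ENNReal.ofReal (r/4) ∧ m B < ENNReal.ofReal (d1/2)) ∧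
      (0 < r' ∧ r' ≤ r/4 ∧ r' ≤ d1/2 ∧ r' ≤ d2/2) ∧
      m (⋂ n ∈ Finset.Icc j M, {x | T n (ind (E ∪ A)) x ≤ 1 - q j / 2})
        ≤ ENNReal.ofReal (q j / 2) ∧
      m (⋂ n ∈ Finset.Icc j M', {x | q j / 2 ≤ T n (ind ((E ∪ A) \ B)) x})
        ≤ ENNReal.ofReal (q j / 2) ∧
      (0 < d1 ∧ ∀ D : Set X, MeasurableSet D → m D < ENNReal.ofReal d1 →
        ∀ n, m {x | q j / (4*(M+1)) < T n (ind D) x}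
          ≤ ENNReal.ofReal (q j / (4*(M+1)))) ∧
      (0 < d2 ∧ ∀ D : Set X, MeasurableSet D → m D < ENNReal.ofReal d2 →
        ∀ n, m {x | q j / (4*(M'+1)) < T n (ind D) x}
          ≤ ENNReal.ofReal (q j / (4*(M'+1)))) := by
  by_cases hE : MeasurableSet E
  · by_cases hr : (0:ℝ) < r
    · -- main construction
      have hq0 := q_pos j
      have hq1 := q_le_one j
      set δ : ℝ := 1 - q j / 4 with hδ
      have hδ0 : 0 < δ := by simp only [hδ]; linarith
      have hδ1 : δ < 1 := by simp only [hδ]; linarith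
      obtain ⟨A, hA, hmA, haeA⟩ := hsweep δ hδ0 hδ1 (r/4) (by linarith)
      set E' : Set X := E ∪ A with hE'def
      have hE' : MeasurableSet E' := hE.union hA
      have hcb : ∀ (S : Set X), MeasurableSet S → ∀ x,
          IsCoboundedUnder (· ≤ ·) atTop (fun n => T n (ind S) x) := by
        intro S hS x
        have hb : IsBoundedUnder (· ≥ ·) atTop (fun n => T n (ind S) x) :=
          isBoundedUnder_of ⟨0, fun n => fT_nonneg hadd hpos hone n hS x⟩
        exact hb.isCoboundedUnder_le
      have hfreq : ∀ᵐ x ∂m, ∃ᶠ n in atTop, 1 - q j / 2 < T n (ind E') x := by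
        refine haeA.mono fun x hx => ?_
        have h1 : (1 - q j / 2 : ℝ) < limsup (fun n => T n (ind A) x) atTop :=
          lt_of_lt_of_le (by linarith) hx
        have h2 := frequently_lt_of_lt_limsup (hcb A hA x) h1
        exact h2.mono fun n hn => lt_of_lt_of_le hn (fT_mono hadd hpos hone n hA hE' subset_union_right x)
      have hSinf : m (⋂ (n : ℕ), ⋂ (_ : j ≤ n), {x | T n (ind E') x ≤ 1 - q j / 2}) = 0 := by
        refine measure_mono_null ?_ (ae_iff.1 hfreq)
        intro x hx
        simp only [Set.mem_iInter, Set.mem_setOf_eq] at hx ⊢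
        intro hfx
        obtain ⟨n, hn, hlt⟩ := frequently_atTop.1 hfx j
        exact absurd (hx n hn) (not_le.2 hlt)
      obtain ⟨M, hM⟩ : ∃ M : ℕ,
          m (⋂ n ∈ Finset.Icc j M, {x | T n (ind E') x ≤ 1 - q j / 2})
            ≤ ENNReal.ofReal (q j / 2) := by
        set g : ℕ → Set X :=
          fun M => ⋂ n ∈ Finset.Icc j M, {x | T n (ind E') x ≤ 1 - q j / 2} with hg
        have hmg : ∀ M, MeasurableSet (g M) := by
          intro M
          refine Finset.measurableSet_biInter _ fun n _ => ?_
          exact measurableSet_le (hmeas n _ (ind_int hE')) measurable_const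
        have hanti : Antitone g := by
          intro a b hab x hx
          simp only [hg, Set.mem_iInter, Finset.mem_Icc] at hx ⊢
          exact fun n hn => hx n ⟨hn.1, hn.2.trans hab⟩
        have hiI : ⋂ M, g M = ⋂ (n : ℕ), ⋂ (_ : j ≤ n), {x | T n (ind E') x ≤ 1 - q j / 2} := by
          ext x
          simp only [hg, Set.mem_iInter, Finset.mem_Icc]
          exact ⟨fun h n hn => h n n ⟨hn, le_refl n⟩, fun h M n hn => h n hn.1⟩
        have htend := tendsto_measure_iInter_atTop (μ := m)
          (fun M => (hmg M).nullMeasurableSet) hanti ⟨0, measure_ne_top m _⟩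
        rw [hiI, hSinf] at htend
        have hpos' : (0:ℝ≥0∞) < ENNReal.ofReal (q j / 2) := ENNReal.ofReal_pos.2 (by linarith)
        obtain ⟨M, hM⟩ := (htend.eventually (gt_mem_nhds hpos')).exists
        exact ⟨M, le_of_lt hM⟩
      have hγ1 : (0:ℝ) < q j / (4*(M+1)) := by positivity
      obtain ⟨d1, hd1pos, hd1⟩ := habs _ hγ1
      obtain ⟨B, hB, hmB, haeB⟩ := hsweep δ hδ0 hδ1 (min (r/4) (d1/2))
        (lt_min (by linarith) (by linarith))
      set E'' : Set X := E' \ B with hE''def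
      have hE'' : MeasurableSet E'' := hE'.diff hB
      have hfreq2 : ∀ᵐ x ∂m, ∃ᶠ n in atTop, T n (ind E'') x < q j / 2 := by
        refine haeB.mono fun x hx => ?_
        have h1 : (1 - q j / 2 : ℝ) < limsup (fun n => T n (ind B) x) atTop :=
          lt_of_lt_of_le (by linarith) hx
        have h2 := frequently_lt_of_lt_limsup (hcb B hB x) h1
        refine h2.mono fun n hn => ?_
        have h3 : T n (ind E'') x ≤ T n (ind Bᶜ) x :=
          fT_mono hadd hpos hone n hE'' hB.compl (fun y hy => hy.2) x
        have h4 := fT_compl hadd hpos hone n hB x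
        rw [h4] at h3
        linarith
      have hSinf2 : m (⋂ (n : ℕ), ⋂ (_ : j ≤ n), {x | q j / 2 ≤ T n (ind E'') x}) = 0 := by
        refine measure_mono_null ?_ (ae_iff.1 hfreq2)
        intro x hx
        simp only [Set.mem_iInter, Set.mem_setOf_eq] at hx ⊢
        intro hfx
        obtain ⟨n, hn, hlt⟩ := frequently_atTop.1 hfx j
        exact absurd (hx n hn) (not_le.2 hlt)
      obtain ⟨M', hM'⟩ : ∃ M' : ℕ,
          m (⋂ n ∈ Finset.Icc j M', {x | q j / 2 ≤ T n (ind E'') x})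
            ≤ ENNReal.ofReal (q j / 2) := by
        set g : ℕ → Set X :=
          fun M => ⋂ n ∈ Finset.Icc j M, {x | q j / 2 ≤ T n (ind E'') x} with hg
        have hmg : ∀ M, MeasurableSet (g M) := by
          intro M
          refine Finset.measurableSet_biInter _ fun n _ => ?_
          exact measurableSet_le measurable_const (hmeas n _ (ind_int hE''))
        have hanti : Antitone g := by
          intro a b hab x hx
          simp only [hg, Set.mem_iInter, Finset.mem_Icc] at hx ⊢
          exact fun n hn => hx n ⟨hn.1, hn.2.trans hab⟩
        have hiI : ⋂ M, g M = ⋂ (n : ℕ), ⋂ (_ : j ≤ n), {x | q j / 2 ≤ T n (ind E'') x} := by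
          ext x
          simp only [hg, Set.mem_iInter, Finset.mem_Icc]
          exact ⟨fun h n hn => h n n ⟨hn, le_refl n⟩, fun h M n hn => h n hn.1⟩
        have htend := tendsto_measure_iInter_atTop (μ := m)
          (fun M => (hmg M).nullMeasurableSet) hanti ⟨0, measure_ne_top m _⟩
        rw [hiI, hSinf2] at htend
        have hpos' : (0:ℝ≥0∞) < ENNReal.ofReal (q j / 2) := ENNReal.ofReal_pos.2 (by linarith)
        obtain ⟨M', hM'⟩ := (htend.eventually (gt_mem_nhds hpos')).exists
        exact ⟨M', le_of_lt hM'⟩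
      have hγ2 : (0:ℝ) < q j / (4*(M'+1)) := by positivity
      obtain ⟨d2, hd2pos, hd2⟩ := habs _ hγ2
      refine ⟨A, B, M, M', min (r/4) (min (d1/2) (d2/2)), d1, d2, fun _ _ => ?_⟩
      refine ⟨⟨hA, hmA⟩, ⟨hB, ?_, ?_⟩, ⟨?_, ?_, ?_, ?_⟩, hM, hM', ⟨hd1pos, ?_⟩, ⟨hd2pos, ?_⟩⟩
      · exact lt_of_lt_of_le hmB (ENNReal.ofReal_le_ofReal (min_le_left _ _))
      · exact lt_of_lt_of_le hmB (ENNReal.ofReal_le_ofReal (min_le_right _ _))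
      · exact lt_min (by linarith) (lt_min (by linarith) (by linarith))
      · exact min_le_left _ _
      · exact (min_le_right _ _).trans (min_le_left _ _)
      · exact (min_le_right _ _).trans (min_le_right _ _)
      · exact fun D hD hmD n => le_of_lt (hd1 D hD hmD n)
      · exact fun D hD hmD n => le_of_lt (hd2 D hD hmD n)
    · exact ⟨∅, ∅, 0, 0, 1, 1, 1, fun _ h => absurd h hr⟩
  · exact ⟨∅, ∅, 0, 0, 1, 1, 1, fun h _ => absurd h hE⟩

end

def buildSeq {X : Type*} (Af Bf : ℕ → Set X → ℝ → Set X) (rf : ℕ → Set X → ℝ → ℝ)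
    (init : Set X × ℝ) : ℕ → Set X × ℝ
  | 0 => init
  | j+1 =>
    let p := buildSeq Af Bf rf init j
    ((p.1 ∪ Af j p.1 p.2) \ Bf j p.1 p.2, rf j p.1 p.2)

end SSOAux

open SSOAux

/-- **δ-sweeping out for all δ < 1 implies strong sweeping out (Theorem 6).**
Let `(T n)` be linear operators from `L¹(X,m)` to measurable functions satisfying
positivity, `T n 1 = 1`, and the continuity condition (3). If `(T n)` is `δ`-sweeping
out for every `0 < δ < 1`, then it is strong sweeping out. -/
theorem strong_sweeping_out_of_delta_sweeping_out
    {X : Type*} [MeasurableSpace X] (m : Measure X) [IsProbabilityMeasure m]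
    (T : ℕ → (X → ℝ) → (X → ℝ))
    -- `T n` is linear (on integrable functions) and maps into measurable functions
    (hadd : ∀ n f g, Integrable f m → Integrable g m →
      T n (fun x => f x + g x) = fun x => T n f x + T n g x)
    (hsmul : ∀ (n : ℕ) (c : ℝ) (f), Integrable f m →
      T n (fun x => c * f x) = fun x => c * T n f x)
    (hmeas : ∀ n f, Integrable f m → Measurable (T n f))
    -- (1) positivity
    (hpos : ∀ n f, Integrable f m → (∀ x, 0 ≤ f x) → ∀ x, 0 ≤ T n f x)
    -- (2) `T n 𝟙_X = 1`
    (hone : ∀ n, T n (fun _ => 1) = fun _ => 1)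
    -- (3) continuity at small sets
    (habs : ∀ ε : ℝ, 0 < ε → ∃ δ : ℝ, 0 < δ ∧
      ∀ E : Set X, MeasurableSet E → m E < ENNReal.ofReal δ →
        ∀ n, m {x | ε < T n (E.indicator fun _ => (1:ℝ)) x} < ENNReal.ofReal ε)
    -- `(T n)` is δ-sweeping out for every `0 < δ < 1`
    (hsweep : ∀ δ : ℝ, 0 < δ → δ < 1 → ∀ ε : ℝ, 0 < ε →
      ∃ E : Set X, MeasurableSet E ∧ m E < ENNReal.ofReal ε ∧
        ∀ᵐ x ∂m, δ ≤ limsup (fun n => T n (E.indicator fun _ => (1:ℝ)) x) atTop) :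
    -- conclusion: strong sweeping out
    ∀ ε : ℝ, 0 < ε →
      ∃ E : Set X, MeasurableSet E ∧ m E < ENNReal.ofReal ε ∧
        (∀ᵐ x ∂m, limsup (fun n => T n (E.indicator fun _ => (1:ℝ)) x) atTop = 1) ∧
        (∀ᵐ x ∂m, liminf (fun n => T n (E.indicator fun _ => (1:ℝ)) x) atTop = 0) := by
  intro ε hε
  choose Af Bf Mf M'f rf d1f d2f hspec using
    exists_step hadd hpos hone hmeas habs hsweep
  set seq : ℕ → Set X × ℝ := buildSeq Af Bf rf (∅, ε/2) with hseqdef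
  have hseqS : ∀ j, seq (j+1) =
      (((seq j).1 ∪ Af j (seq j).1 (seq j).2) \ Bf j (seq j).1 (seq j).2,
        rf j (seq j).1 (seq j).2) := fun j => rfl
  have hinv : ∀ j, MeasurableSet (seq j).1 ∧ 0 < (seq j).2 := by
    intro j
    induction j with
    | zero =>
      refine ⟨MeasurableSet.empty, ?_⟩
      have h0 : (seq 0).2 = ε/2 := rfl
      rw [h0]; linarith
    | succ j ih =>
      obtain ⟨⟨hA, _⟩, ⟨hB, _, _⟩, ⟨hr0, _, _, _⟩, _⟩ :=
        hspec j (seq j).1 (seq j).2 ih.1 ih.2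
      rw [hseqS j]
      exact ⟨(ih.1.union hA).diff hB, hr0⟩
  -- abbreviations
  set Aj : ℕ → Set X := fun j => Af j (seq j).1 (seq j).2 with hAjdef
  set Bj : ℕ → Set X := fun j => Bf j (seq j).1 (seq j).2 with hBjdef
  set Mj : ℕ → ℕ := fun j => Mf j (seq j).1 (seq j).2 with hMjdef
  set M'j : ℕ → ℕ := fun j => M'f j (seq j).1 (seq j).2 with hM'jdef
  set d1j : ℕ → ℝ := fun j => d1f j (seq j).1 (seq j).2 with hd1jdef
  set d2j : ℕ → ℝ := fun j => d2f j (seq j).1 (seq j).2 with hd2jdef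
  have hC := fun j => hspec j (seq j).1 (seq j).2 (hinv j).1 (hinv j).2
  have hA : ∀ j, MeasurableSet (Aj j) := fun j => (hC j).1.1
  have hmA : ∀ j, m (Aj j) < ENNReal.ofReal ((seq j).2/4) := fun j => (hC j).1.2
  have hB : ∀ j, MeasurableSet (Bj j) := fun j => (hC j).2.1.1
  have hmBr : ∀ j, m (Bj j) < ENNReal.ofReal ((seq j).2/4) := fun j => (hC j).2.1.2.1
  have hmBd : ∀ j, m (Bj j) < ENNReal.ofReal (d1j j/2) := fun j => (hC j).2.1.2.2
  have hr4 : ∀ j, (seq (j+1)).2 ≤ (seq j).2/4 := by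
    intro j; rw [hseqS j]; exact (hC j).2.2.1.2.1
  have hrd1 : ∀ j, (seq (j+1)).2 ≤ d1j j/2 := by
    intro j; rw [hseqS j]; exact (hC j).2.2.1.2.2.1
  have hrd2 : ∀ j, (seq (j+1)).2 ≤ d2j j/2 := by
    intro j; rw [hseqS j]; exact (hC j).2.2.1.2.2.2
  have hF1 : ∀ j, m (⋂ n ∈ Finset.Icc j (Mj j),
      {x | T n (ind ((seq j).1 ∪ Aj j)) x ≤ 1 - q j / 2}) ≤ ENNReal.ofReal (q j / 2) :=
    fun j => (hC j).2.2.2.1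
  have hF2 : ∀ j, m (⋂ n ∈ Finset.Icc j (M'j j),
      {x | q j / 2 ≤ T n (ind (((seq j).1 ∪ Aj j) \ Bj j)) x}) ≤ ENNReal.ofReal (q j / 2) :=
    fun j => (hC j).2.2.2.2.1
  have hd1 : ∀ j, 0 < d1j j ∧ ∀ D : Set X, MeasurableSet D → m D < ENNReal.ofReal (d1j j) →
      ∀ n, m {x | q j / (4*(Mj j+1)) < T n (ind D) x} ≤ ENNReal.ofReal (q j / (4*(Mj j+1))) :=
    fun j => (hC j).2.2.2.2.2.1
  have hd2 : ∀ j, 0 < d2j j ∧ ∀ D : Set X, MeasurableSet D → m D < ENNReal.ofReal (d2j j) →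
      ∀ n, m {x | q j / (4*(M'j j+1)) < T n (ind D) x} ≤ ENNReal.ofReal (q j / (4*(M'j j+1))) :=
    fun j => (hC j).2.2.2.2.2.2
  -- geometric decay of the budgets
  have hrgeo : ∀ j i, (seq (j+i)).2 ≤ (seq j).2 * (1/4)^i := by
    intro j i
    induction i with
    | zero => simp
    | succ i ih =>
      have h1 := hr4 (j+i)
      have h2 : (seq (j+(i+1))).2 = (seq ((j+i)+1)).2 := by ring_nf
      rw [h2]
      calc (seq ((j+i)+1)).2 ≤ (seq (j+i)).2/4 := h1
        _ ≤ (seq j).2 * (1/4)^i / 4 := by linarith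
        _ = (seq j).2 * (1/4)^(i+1) := by ring
  -- the changes at each step
  set chg : ℕ → Set X := fun j => Aj j ∪ Bj j with hchgdef
  have hchgmeas : ∀ j, MeasurableSet (chg j) := fun j => (hA j).union (hB j)
  have hmchg : ∀ j, m (chg j) ≤ ENNReal.ofReal ((seq j).2/2) := by
    intro j
    refine (measure_union_le _ _).trans ?_
    refine (add_le_add (le_of_lt (hmA j)) (le_of_lt (hmBr j))).trans ?_
    rw [← ENNReal.ofReal_add (by have := (hinv j).2; linarith) (by have := (hinv j).2; linarith)]
    exact ENNReal.ofReal_le_ofReal (by linarith)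
  have htail : ∀ j, m (⋃ i, chg (j+i)) ≤ ENNReal.ofReal ((seq j).2) := by
    intro j
    refine (measure_iUnion_le _).trans ?_
    have h1 : ∀ i, m (chg (j+i)) ≤ ENNReal.ofReal ((seq j).2/2 * (1/4)^i) := by
      intro i
      refine (hmchg (j+i)).trans (ENNReal.ofReal_le_ofReal ?_)
      have := hrgeo j i
      linarith
    refine (ENNReal.tsum_le_tsum h1).trans ?_
    have hs : Summable (fun i : ℕ => (seq j).2/2 * (1/4)^i) :=
      (summable_geometric_of_lt_one (by norm_num) (by norm_num)).mul_left _
    have hnn : ∀ i : ℕ, 0 ≤ (seq j).2/2 * (1/4)^i := by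
      intro i
      have := (hinv j).2
      positivity
    rw [← ENNReal.ofReal_tsum_of_nonneg hnn hs]
    refine ENNReal.ofReal_le_ofReal ?_
    rw [tsum_mul_left, tsum_geometric_of_lt_one (by norm_num) (by norm_num)]
    have := (hinv j).2
    rw [show ((1:ℝ) - 1/4)⁻¹ = 4/3 by norm_num]
    linarith
  -- the limit set
  set E : Set X := ⋃ N, ⋂ i, (seq (N+i)).1 with hEdef
  have hEmeas : MeasurableSet E :=
    MeasurableSet.iUnion fun N => MeasurableSet.iInter fun i => (hinv (N+i)).1
  have htrans : ∀ j, (seq (j+1)).1 ∆ (seq j).1 ⊆ chg j := by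
    intro j x hx
    rw [hseqS j] at hx
    simp only [Set.mem_symmDiff, Set.mem_diff, Set.mem_union] at hx
    simp only [hchgdef, Set.mem_union]
    rcases hx with ⟨⟨h1, h2⟩, h3⟩ | ⟨h1, h2⟩
    · rcases h1 with h1 | h1
      · exact absurd h1 h3
      · exact Or.inl h1
    · push_neg at h2
      rcases h2 (Or.inl h1) with h2
      exact Or.inr h2
  have hdiffk : ∀ k i, (seq (k+i)).1 ∆ (seq k).1 ⊆ ⋃ i', chg (k+i') := by
    intro k i
    induction i with
    | zero => simp
    | succ i ih =>
      have h2 : (seq (k+(i+1))).1 = (seq ((k+i)+1)).1 := by ring_nf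
      rw [h2]
      refine (symmDiff_triangle _ (seq (k+i)).1 _).trans ?_
      refine Set.union_subset ?_ ih
      refine (htrans (k+i)).trans ?_
      exact Set.subset_iUnion (fun i' => chg (k+i')) i
  have hEd : ∀ N, E ∆ (seq N).1 ⊆ ⋃ i, chg (N+i) := by
    intro N x hx
    rcases Set.mem_symmDiff.1 hx with ⟨h1, h2⟩ | ⟨h1, h2⟩
    · obtain ⟨N', hN'⟩ := Set.mem_iUnion.1 h1
      have hx1 : x ∈ (seq (N+N')).1 := by
        have := Set.mem_iInter.1 hN' N
        rwa [Nat.add_comm N' N] at this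
      exact hdiffk N N' (Set.mem_symmDiff.2 (Or.inl ⟨hx1, h2⟩))
    · have h3 : x ∉ ⋂ i, (seq (N+i)).1 := fun hc => h2 (Set.mem_iUnion.2 ⟨N, hc⟩)
      obtain ⟨i, hi⟩ : ∃ i, x ∉ (seq (N+i)).1 := by
        by_contra hc; push_neg at hc; exact h3 (Set.mem_iInter.2 hc)
      exact hdiffk N i (Set.mem_symmDiff.2 (Or.inr ⟨h1, hi⟩))
  have hEdm : ∀ N, m (E ∆ (seq N).1) ≤ ENNReal.ofReal ((seq N).2) :=
    fun N => (measure_mono (hEd N)).trans (htail N)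
  have hmE : m E < ENNReal.ofReal ε := by
    have h0 : E ∆ (seq 0).1 = E := by
      show E ∆ (∅ : Set X) = E
      simp [symmDiff_bot]
    have h2 := hEdm 0
    rw [h0] at h2
    have h3 : (seq 0).2 = ε/2 := rfl
    rw [h3] at h2
    refine lt_of_le_of_lt h2 ?_
    exact (ENNReal.ofReal_lt_ofReal_iff hε).2 (by linarith)
  -- transfer of the finitary facts to `E`
  have hndiff : ∀ j, (seq (j+1)).1 ∆ ((seq j).1 ∪ Aj j) ⊆ Bj j := by
    intro j x hx
    rw [hseqS j] at hx
    rcases Set.mem_symmDiff.1 hx with ⟨h1, h2⟩ | ⟨h1, h2⟩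
    · exact absurd h1.1 h2
    · by_contra hxB
      exact h2 ⟨h1, hxB⟩
  have hE1succ : ∀ j, (seq (j+1)).1 = ((seq j).1 ∪ Aj j) \ Bj j := by
    intro j; rw [hseqS j]
  have hF1E : ∀ j, m (⋂ n ∈ Finset.Icc j (Mj j), {x | T n (ind E) x ≤ 1 - q j})
      ≤ ENNReal.ofReal (q j) := by
    intro j
    have hq0 := q_pos j
    have hMpos : (0:ℝ) < (Mj j : ℝ) + 1 := by positivity
    set γ : ℝ := q j / (4*((Mj j : ℝ)+1)) with hγdef
    have hγ0 : 0 < γ := by positivity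
    have hγ4 : γ ≤ q j / 4 := by
      rw [hγdef, div_le_div_iff₀ (by positivity) (by norm_num)]
      nlinarith [Nat.cast_nonneg (α := ℝ) (Mj j)]
    set E' : Set X := (seq j).1 ∪ Aj j with hE'def
    have hE'meas : MeasurableSet E' := (hinv j).1.union (hA j)
    -- the perturbation is small
    have hDsub : E ∆ E' ⊆ (E ∆ (seq (j+1)).1) ∪ Bj j := by
      refine (symmDiff_triangle E (seq (j+1)).1 E').trans ?_
      exact Set.union_subset_union subset_rfl (hndiff j)
    have hDm : m (E ∆ E') < ENNReal.ofReal (d1j j) := by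
      refine lt_of_le_of_lt ((measure_mono hDsub).trans
        ((measure_union_le _ _).trans (add_le_add (hEdm (j+1)) le_rfl))) ?_
      have h1 : ENNReal.ofReal ((seq (j+1)).2) ≤ ENNReal.ofReal (d1j j/2) :=
        ENNReal.ofReal_le_ofReal (hrd1 j)
      refine lt_of_le_of_lt (add_le_add h1 le_rfl) ?_
      have h2 := ENNReal.add_lt_add_left (a := ENNReal.ofReal (d1j j/2))
        ENNReal.ofReal_ne_top (hmBd j)
      refine lt_of_lt_of_le h2 ?_
      rw [← ENNReal.ofReal_add (by linarith [(hd1 j).1]) (by linarith [(hd1 j).1])]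
      exact ENNReal.ofReal_le_ofReal (by linarith)
    have hper : ∀ n, m {x | γ < T n (ind (E ∆ E')) x} ≤ ENNReal.ofReal γ :=
      (hd1 j).2 (E ∆ E') ((hEmeas.symmDiff hE'meas)) hDm
    have hstab := stab_le hadd hpos hone hEmeas hE'meas j (Mj j) hper (c := 1 - q j)
    refine hstab.trans ?_
    have hmono : (⋂ n ∈ Finset.Icc j (Mj j), {x | T n (ind E') x ≤ 1 - q j + γ}) ⊆
        ⋂ n ∈ Finset.Icc j (Mj j), {x | T n (ind E') x ≤ 1 - q j / 2} := by
      refine Set.iInter₂_mono fun n hn => ?_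
      intro x hx
      simp only [Set.mem_setOf_eq] at hx ⊢
      linarith
    have hcard : ((Mj j : ℝ≥0∞) + 1) * ENNReal.ofReal γ = ENNReal.ofReal (q j / 4) := by
      have hcast : ((Mj j : ℝ≥0∞) + 1) = ENNReal.ofReal ((Mj j : ℝ) + 1) := by
        rw [ENNReal.ofReal_add (Nat.cast_nonneg _) zero_le_one, ENNReal.ofReal_natCast,
          ENNReal.ofReal_one]
      rw [hcast, ← ENNReal.ofReal_mul (by positivity)]
      congr 1
      rw [hγdef]
      field_simp
      try ring
    rw [hcard]
    refine le_trans (add_le_add ((measure_mono hmono).trans (hF1 j)) le_rfl) ?_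
    rw [← ENNReal.ofReal_add (by linarith) (by linarith)]
    exact ENNReal.ofReal_le_ofReal (by linarith)
  have hF2E : ∀ j, m (⋂ n ∈ Finset.Icc j (M'j j), {x | q j ≤ T n (ind E) x})
      ≤ ENNReal.ofReal (q j) := by
    intro j
    have hq0 := q_pos j
    have hMpos : (0:ℝ) < (M'j j : ℝ) + 1 := by positivity
    set γ : ℝ := q j / (4*((M'j j : ℝ)+1)) with hγdef
    have hγ0 : 0 < γ := by positivity
    have hγ4 : γ ≤ q j / 4 := by
      rw [hγdef, div_le_div_iff₀ (by positivity) (by norm_num)]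
      nlinarith [Nat.cast_nonneg (α := ℝ) (M'j j)]
    set E'' : Set X := (seq (j+1)).1 with hE''def
    have hE''meas : MeasurableSet E'' := (hinv (j+1)).1
    have hDm : m (E ∆ E'') < ENNReal.ofReal (d2j j) := by
      refine lt_of_le_of_lt ((hEdm (j+1)).trans
        (ENNReal.ofReal_le_ofReal (hrd2 j))) ?_
      exact (ENNReal.ofReal_lt_ofReal_iff (hd2 j).1).2 (by linarith [(hd2 j).1])
    have hper : ∀ n, m {x | γ < T n (ind (E ∆ E'')) x} ≤ ENNReal.ofReal γ :=
      (hd2 j).2 (E ∆ E'') ((hEmeas.symmDiff hE''meas)) hDm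
    have hstab := stab_ge hadd hpos hone hEmeas hE''meas j (M'j j) hper (c := q j)
    refine hstab.trans ?_
    have hmono : (⋂ n ∈ Finset.Icc j (M'j j), {x | q j - γ ≤ T n (ind E'') x}) ⊆
        ⋂ n ∈ Finset.Icc j (M'j j), {x | q j / 2 ≤ T n (ind E'') x} := by
      refine Set.iInter₂_mono fun n hn => ?_
      intro x hx
      simp only [Set.mem_setOf_eq] at hx ⊢
      linarith
    have hcard : ((M'j j : ℝ≥0∞) + 1) * ENNReal.ofReal γ = ENNReal.ofReal (q j / 4) := by
      have hcast : ((M'j j : ℝ≥0∞) + 1) = ENNReal.ofReal ((M'j j : ℝ) + 1) := by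
        rw [ENNReal.ofReal_add (Nat.cast_nonneg _) zero_le_one, ENNReal.ofReal_natCast,
          ENNReal.ofReal_one]
      rw [hcast, ← ENNReal.ofReal_mul (by positivity)]
      congr 1
      rw [hγdef]
      field_simp
      try ring
    rw [hcard]
    have hF2' := hF2 j
    rw [← hE1succ j] at hF2'
    refine le_trans (add_le_add ((measure_mono hmono).trans hF2') le_rfl) ?_
    rw [← ENNReal.ofReal_add (by linarith) (by linarith)]
    exact ENNReal.ofReal_le_ofReal (by linarith)
  -- convergence of the bounds to zero
  have htq : Tendsto (fun j : ℕ => ENNReal.ofReal (q j)) atTop (𝓝 0) := by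
    have h1 : Tendsto (fun j : ℕ => q j) atTop (𝓝 0) := by
      have := tendsto_one_div_add_atTop_nhds_zero_nat (𝕜 := ℝ)
      simpa [q] using this
    have h2 := ENNReal.tendsto_ofReal h1
    rwa [ENNReal.ofReal_zero] at h2
  -- the two families of tail sets are null
  have hT1 : ∀ N k : ℕ, m (⋂ n, ⋂ (_ : N ≤ n), {x | T n (ind E) x ≤ 1 - q k}) = 0 := by
    intro N k
    set S := ⋂ n, ⋂ (_ : N ≤ n), {x | T n (ind E) x ≤ 1 - q k} with hSdef
    have hb : ∀ j, N ≤ j → k ≤ j → m S ≤ ENNReal.ofReal (q j) := by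
      intro j hN hk
      refine le_trans (measure_mono ?_) (hF1E j)
      intro x hx
      simp only [hSdef, Set.mem_iInter, Set.mem_setOf_eq] at hx
      simp only [Set.mem_iInter, Set.mem_setOf_eq, Finset.mem_Icc]
      intro n hn
      have h1 := hx n (le_trans hN hn.1)
      have h2 := q_anti hk
      linarith
    by_contra h
    have hpos' : (0:ℝ≥0∞) < m S := pos_iff_ne_zero.2 h
    have hev := (htq.eventually (gt_mem_nhds hpos')).and
      ((eventually_ge_atTop N).and (eventually_ge_atTop k))
    obtain ⟨j, h1, h2, h3⟩ := hev.exists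
    exact absurd (hb j h2 h3) (not_le.2 h1)
  have hT2 : ∀ N k : ℕ, m (⋂ n, ⋂ (_ : N ≤ n), {x | q k ≤ T n (ind E) x}) = 0 := by
    intro N k
    set S := ⋂ n, ⋂ (_ : N ≤ n), {x | q k ≤ T n (ind E) x} with hSdef
    have hb : ∀ j, N ≤ j → k ≤ j → m S ≤ ENNReal.ofReal (q j) := by
      intro j hN hk
      refine le_trans (measure_mono ?_) (hF2E j)
      intro x hx
      simp only [hSdef, Set.mem_iInter, Set.mem_setOf_eq] at hx
      simp only [Set.mem_iInter, Set.mem_setOf_eq, Finset.mem_Icc]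
      intro n hn
      have h1 := hx n (le_trans hN hn.1)
      have h2 := q_anti hk
      linarith
    by_contra h
    have hpos' : (0:ℝ≥0∞) < m S := pos_iff_ne_zero.2 h
    have hev := (htq.eventually (gt_mem_nhds hpos')).and
      ((eventually_ge_atTop N).and (eventually_ge_atTop k))
    obtain ⟨j, h1, h2, h3⟩ := hev.exists
    exact absurd (hb j h2 h3) (not_le.2 h1)
  have hqt0 : Tendsto (fun k : ℕ => q k) atTop (𝓝 0) := by
    have := tendsto_one_div_add_atTop_nhds_zero_nat (𝕜 := ℝ)
    simpa [q] using this
  have hub : ∀ x n, T n (ind E) x ≤ 1 := fun x n => fT_le_one hadd hpos hone n hEmeas x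
  have hlb : ∀ x n, 0 ≤ T n (ind E) x := fun x n => fT_nonneg hadd hpos hone n hEmeas x
  refine ⟨E, hEmeas, hmE, ?_, ?_⟩
  · -- limsup = 1 a.e.
    have hbad : m (⋃ k : ℕ, ⋃ N : ℕ, ⋂ n, ⋂ (_ : N ≤ n), {x | T n (ind E) x ≤ 1 - q k}) = 0 :=
      measure_iUnion_null fun k => measure_iUnion_null fun N => hT1 N k
    rw [ae_iff]
    refine measure_mono_null ?_ hbad
    intro x hx
    simp only [Set.mem_setOf_eq] at hx
    by_contra hxn
    apply hx
    simp only [Set.mem_iUnion, Set.mem_iInter, Set.mem_setOf_eq, not_exists] at hxn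
    have hxn' : ∀ k N : ℕ, ∃ n, N ≤ n ∧ 1 - q k < T n (ind E) x := by
      intro k N
      by_contra hc
      push_neg at hc
      exact hxn k N (fun n hn => hc n hn)
    set u : ℕ → ℝ := fun n => T n (ind E) x with hudef
    have hbdd_le : IsBoundedUnder (· ≤ ·) atTop u := isBoundedUnder_of ⟨1, hub x⟩
    have hbdd_ge : IsBoundedUnder (· ≥ ·) atTop u := isBoundedUnder_of ⟨0, hlb x⟩
    have le1 : limsup u atTop ≤ 1 :=
      limsup_le_of_le hbdd_ge.isCoboundedUnder_le (Eventually.of_forall (hub x))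
    have hge : ∀ k : ℕ, 1 - q k ≤ limsup u atTop := by
      intro k
      refine le_limsup_of_frequently_le ?_ hbdd_le
      refine frequently_atTop.2 fun N => ?_
      obtain ⟨n, hn1, hn2⟩ := hxn' k N
      exact ⟨n, hn1, le_of_lt hn2⟩
    have htq1 : Tendsto (fun k : ℕ => 1 - q k) atTop (𝓝 1) := by
      have h0 : Tendsto (fun _ : ℕ => (1:ℝ)) atTop (𝓝 1) := tendsto_const_nhds
      have := h0.sub hqt0
      simpa using this
    have ge1 : (1:ℝ) ≤ limsup u atTop := le_of_tendsto htq1 (Eventually.of_forall hge)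
    exact le_antisymm le1 ge1
  · -- liminf = 0 a.e.
    have hbad : m (⋃ k : ℕ, ⋃ N : ℕ, ⋂ n, ⋂ (_ : N ≤ n), {x | q k ≤ T n (ind E) x}) = 0 :=
      measure_iUnion_null fun k => measure_iUnion_null fun N => hT2 N k
    rw [ae_iff]
    refine measure_mono_null ?_ hbad
    intro x hx
    simp only [Set.mem_setOf_eq] at hx
    by_contra hxn
    apply hx
    simp only [Set.mem_iUnion, Set.mem_iInter, Set.mem_setOf_eq, not_exists] at hxn
    have hxn' : ∀ k N : ℕ, ∃ n, N ≤ n ∧ T n (ind E) x < q k := by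
      intro k N
      by_contra hc
      push_neg at hc
      exact hxn k N (fun n hn => hc n hn)
    set u : ℕ → ℝ := fun n => T n (ind E) x with hudef
    have hbdd_le : IsBoundedUnder (· ≤ ·) atTop u := isBoundedUnder_of ⟨1, hub x⟩
    have hbdd_ge : IsBoundedUnder (· ≥ ·) atTop u := isBoundedUnder_of ⟨0, hlb x⟩
    have ge0 : (0:ℝ) ≤ liminf u atTop :=
      le_liminf_of_le hbdd_le.isCoboundedUnder_ge (Eventually.of_forall (hlb x))
    have hle : ∀ k : ℕ, liminf u atTop ≤ q k := by
      intro k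
      refine liminf_le_of_frequently_le ?_ hbdd_ge
      refine frequently_atTop.2 fun N => ?_
      obtain ⟨n, hn1, hn2⟩ := hxn' k N
      exact ⟨n, hn1, le_of_lt hn2⟩
    have le0 : liminf u atTop ≤ 0 := ge_of_tendsto hqt0 (Eventually.of_forall hle)
    exact le_antisymm le0 ge0
end
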